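/- arXiv:1803.08818 — 4 statements merged into one kernel-verified Lean document; each statement's English description precedes it below -/
import Mathlib

section
/- Let p_{i,n} denote the number of words of length i over distinct letters of [n] whose complementary letter set [n] \ alph(u) is an arithmetic progression of length n-i with positive common difference (i.e., periodic). Then p_{i,n} = (q/2)·(r + i + 1)·i!, where m = n - i - 1 and q, r are the quotient and remainder of n divided by m. -/
/-- Vector of consecutive differences of a list. -/
def diffs (l : List ℕ) : List ℕ := List.zipWith (fun a b => b - a) l l.tail

/-- Δ(X): consecutive differences of the increasing enumeration of a finite set. -/
def setDiffs (X : Finset ℕ) : List ℕ := diffs (X.sort (· ≤ ·))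

/-- c̄(Δ) = {c, c+d₁, c+d₁+d₂, ...}. -/
def barSet (c : ℕ) (ds : List ℕ) : Finset ℕ :=
  ((List.range (ds.length + 1)).map (fun j => c + (ds.take j).sum)).toFinset

/-- A finite set (of cardinality ≥ 2) is periodic if its consecutive differences are constant. -/
def PeriodicSet (X : Finset ℕ) : Prop :=
  2 ≤ X.card ∧ ∃ d, 0 < d ∧ setDiffs X = List.replicate (X.card - 1) d

/-- A vector is periodic if all its entries are equal to some positive d. -/
def PerVec (v : List ℕ) : Prop := ∃ d, 0 < d ∧ v = List.replicate v.length d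

/-- Membership in D_{|u|,n}: injective word over [n], complement periodic,
no proper nonempty prefix has a periodic complement. -/
def MemD (n : ℕ) (u : List ℕ) : Prop :=
  u.Nodup ∧ (∀ x ∈ u, x ∈ Finset.Icc 1 n) ∧
  PeriodicSet (Finset.Icc 1 n \ u.toFinset) ∧
  ∀ j, 1 ≤ j → j < u.length → ¬ PeriodicSet (Finset.Icc 1 n \ (u.take j).toFinset)

/-- A list is a permutation word of [n]. -/
def IsPermList (n : ℕ) (s : List ℕ) : Prop :=
  s.length = n ∧ s.Nodup ∧ s.toFinset = Finset.Icc 1 n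

/-- s is the inverse permutation word of u (both permutations of [n]). -/
def InvPerm (n : ℕ) (u s : List ℕ) : Prop :=
  IsPermList n u ∧ IsPermList n s ∧
  ∀ j k, j < n → k < n → (u.getD j 0 = k + 1 ↔ s.getD k 0 = j + 1)

/-- Δ_i(s): consecutive differences of {s_i, ..., s_n} (1-indexed). -/
def deltaVec (s : List ℕ) (i : ℕ) : List ℕ := setDiffs (s.drop (i - 1)).toFinset

/-- One transition of a pyramidal sequence: merge two adjacent entries,
or delete the leftmost, or delete the rightmost entry. -/
def PyrStep (v w : List ℕ) : Prop :=
  (∃ l a b r, v = l ++ a :: b :: r ∧ w = l ++ (a + b) :: r) ∨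
  (∃ a r, v = a :: r ∧ w = r) ∨
  (∃ l a, v = l ++ [a] ∧ w = l)

/-- A pyramidal sequence of vectors of size n, encoded as a list [Δ₁, ..., Δ_{n-1}]. -/
def IsPyramidal (n : ℕ) (P : List (List ℕ)) : Prop :=
  P.length = n - 1 ∧ P.getD 0 [] = List.replicate (n - 1) 1 ∧
  ∀ i, i + 1 < n - 1 → PyrStep (P.getD i []) (P.getD (i + 1) [])

/-- A trapezoidal sequence of height i of size n, encoded as [Δ₁, ..., Δ_{i+1}]:
Δ_{i+1} periodic, Δ_j not periodic for 2 ≤ j ≤ i. -/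
def IsTrapezoidal (n i : ℕ) (T : List (List ℕ)) : Prop :=
  T.length = i + 1 ∧ T.getD 0 [] = List.replicate (n - 1) 1 ∧
  (∀ j, j < i → PyrStep (T.getD j []) (T.getD (j + 1) [])) ∧
  PerVec (T.getD i []) ∧
  ∀ j, 1 ≤ j → j < i → ¬ PerVec (T.getD j [])

/-- Non-interval permutation of [m]: no prefix of length l, 2 ≤ l < m, has as
letter set an interval of consecutive integers. -/
def IsNonIntervalPerm (m : ℕ) (s : List ℕ) : Prop :=
  IsPermList m s ∧ ∀ l, 2 ≤ l → l < m → ¬ ∃ a, (s.take l).toFinset = Finset.Icc a (a + l - 1)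

/-- v is obtained from u by a rigid shift of height h by k places to the left:
columns of height < h are untouched and receive nothing; each position of height ≥ h
receives the excess (over h) of the column k places to its right; every block strictly
above the cut lands on a column of height ≥ h. -/
def RigidShiftL (n h k : ℕ) (u v : List ℕ) : Prop :=
  IsPermList n u ∧ IsPermList n v ∧
  (∀ j, j < n → u.getD j 0 < h → v.getD j 0 = u.getD j 0) ∧
  (∀ j, j < n → h ≤ u.getD j 0 → v.getD j 0 = h + (u.getD (j + k) 0 - h)) ∧
  (∀ j, j < n → h < u.getD j 0 → k ≤ j ∧ h ≤ u.getD (j - k) 0)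

/-- Strong shift equivalence: finite sequences of rigid shifts (in either direction). -/
def StrongShiftEq (n : ℕ) (u v : List ℕ) : Prop :=
  Relation.ReflTransGen (fun a b => ∃ h k, RigidShiftL n h k a b ∨ RigidShiftL n h k b a) u v

/-- Shift equivalence: finite sequences of rigid shifts and reversals. -/
def ShiftEq (n : ℕ) (u v : List ℕ) : Prop :=
  Relation.ReflTransGen
    (fun a b => (∃ h k, RigidShiftL n h k a b ∨ RigidShiftL n h k b a) ∨ b = a.reverse) u v

/-- Super-strong Wilf equivalence of permutation words of [n], characterized by
equality of all Δ_i of the inverses. -/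
def SSWilf (n : ℕ) (u v : List ℕ) : Prop :=
  ∃ s t, InvPerm n u s ∧ InvPerm n v t ∧ ∀ i, 1 ≤ i → i ≤ n - 1 → deltaVec s i = deltaVec t i

section Aux

def apL (a d len : ℕ) : List ℕ := (List.range len).map (fun j => a + j * d)

lemma apL_length (a d len : ℕ) : (apL a d len).length = len := by simp [apL]

lemma apL_succ (a d len : ℕ) : apL a d (len + 1) = a :: apL (a + d) d len := by
  simp only [apL, List.range_succ_eq_map, List.map_cons, List.map_map]
  congr 1
  · ring
  · congr 1; funext j; simp only [Function.comp, Nat.succ_eq_add_one]; ring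

lemma diffs_cons_cons (a b : ℕ) (t : List ℕ) :
    diffs (a :: b :: t) = (b - a) :: diffs (b :: t) := rfl

lemma diffs_apL (a d len : ℕ) : diffs (apL a d (len + 1)) = List.replicate len d := by
  induction len generalizing a with
  | zero => rfl
  | succ k ih =>
    rw [apL_succ a, apL_succ (a + d), diffs_cons_cons, ← apL_succ (a + d)]
    rw [ih (a + d)]
    rw [List.replicate_succ]
    congr 1
    omega

lemma apL_pairwise (a d len : ℕ) (hd : 0 < d) : (apL a d len).Pairwise (· < ·) := by
  refine List.Pairwise.map _ (fun j k (h : j < k) => ?_) (List.pairwise_lt_range (n := len))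
  have : j * d < k * d := (Nat.mul_lt_mul_right hd).mpr h
  omega

lemma apL_nodup (a d len : ℕ) (hd : 0 < d) : (apL a d len).Nodup :=
  (apL_pairwise a d len hd).imp ne_of_lt

lemma apL_sorted (a d len : ℕ) (hd : 0 < d) : (apL a d len).Pairwise (· ≤ ·) :=
  (apL_pairwise a d len hd).imp le_of_lt

lemma apL_sort (a d len : ℕ) (hd : 0 < d) :
    (apL a d len).toFinset.sort (· ≤ ·) = apL a d len :=
  (List.toFinset_sort _ (apL_nodup a d len hd)).mpr (apL_sorted a d len hd)

lemma mem_apL (a d len x : ℕ) : x ∈ apL a d len ↔ ∃ j < len, a + j * d = x := by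
  simp [apL]

lemma eq_apL_of_diffs {d : ℕ} : ∀ (t : List ℕ) (a : ℕ), (a :: t).Pairwise (· ≤ ·) →
    diffs (a :: t) = List.replicate t.length d → a :: t = apL a d (t.length + 1)
  | [], a, _, _ => by simp [apL, List.range_succ]
  | b :: t, a, hs, hdf => by
    have hab : a ≤ b := (List.pairwise_cons.mp hs).1 b (by simp)
    rw [diffs_cons_cons, List.length_cons, List.replicate_succ] at hdf
    have h1 : b - a = d := (List.cons.injEq _ _ _ _ ▸ hdf).1
    have h2 : diffs (b :: t) = List.replicate t.length d := (List.cons.injEq _ _ _ _ ▸ hdf).2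
    have hb : b = a + d := by omega
    have := eq_apL_of_diffs t b (List.pairwise_cons.mp hs).2 h2
    rw [List.length_cons, apL_succ, ← hb, ← this]

end Aux

section Aux2

def apF (a d m : ℕ) : Finset ℕ := (apL a d m).toFinset

lemma apF_card (a d m : ℕ) (hd : 0 < d) : (apF a d m).card = m := by
  rw [apF, List.toFinset_card_of_nodup (apL_nodup a d m hd), apL_length]

lemma apF_periodic (a d m : ℕ) (hd : 0 < d) (hm : 2 ≤ m) : PeriodicSet (apF a d m) := by
  refine ⟨by rw [apF_card a d m hd]; exact hm, d, hd, ?_⟩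
  rw [apF_card a d m hd, setDiffs, apF, apL_sort a d m hd]
  obtain ⟨k, rfl⟩ : ∃ k, m = k + 1 := ⟨m - 1, by omega⟩
  rw [diffs_apL]
  congr 1

lemma apF_inj {a d a' d' m : ℕ} (hd : 0 < d) (hd' : 0 < d') (hm : 2 ≤ m)
    (h : apF a d m = apF a' d' m) : a = a' ∧ d = d' := by
  have h2 : apL a d m = apL a' d' m := by
    have := congrArg (fun s : Finset ℕ => s.sort (· ≤ ·)) h
    rwa [apF, apF, apL_sort a d m hd, apL_sort a' d' m hd'] at this
  obtain ⟨k, rfl⟩ : ∃ k, m = k + 2 := ⟨m - 2, by omega⟩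
  rw [show k + 2 = (k + 1) + 1 from rfl, apL_succ, apL_succ, apL_succ, apL_succ] at h2
  have e1 : a = a' := (List.cons.injEq _ _ _ _ ▸ h2).1
  have e2 : a + d = a' + d' := by
    have := (List.cons.injEq _ _ _ _ ▸ h2).2
    exact (List.cons.injEq _ _ _ _ ▸ this).1
  omega

/-- Characterization of periodic subsets of Icc 1 n of cardinality m. -/
lemma periodic_char {n m : ℕ} (hm : 2 ≤ m) (X : Finset ℕ)
    (hsub : X ⊆ Finset.Icc 1 n) (hcard : X.card = m) (hper : PeriodicSet X) :
    ∃ d, 0 < d ∧ ∃ a, 1 ≤ a ∧ a + (m - 1) * d ≤ n ∧ X = apF a d m := by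
  obtain ⟨-, d, hd, hdiff⟩ := hper
  rw [hcard] at hdiff
  have hlen : (X.sort (· ≤ ·)).length = m := by rw [Finset.length_sort, hcard]
  obtain ⟨b, t, hbt⟩ : ∃ b t, X.sort (· ≤ ·) = b :: t := by
    cases h : X.sort (· ≤ ·) with
    | nil => rw [h] at hlen; simp at hlen; omega
    | cons b t => exact ⟨b, t, rfl⟩
  have htlen : t.length = m - 1 := by rw [hbt] at hlen; simp at hlen; omega
  have hsorted : (b :: t).Pairwise (· ≤ ·) := hbt ▸ Finset.pairwise_sort _ _
  have heq : b :: t = apL b d m := by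
    have := eq_apL_of_diffs t b hsorted (by rw [← hbt, ← setDiffs, hdiff, htlen])
    rw [this, htlen]
    congr 1
    omega
  have hX : X = apF b d m := by
    rw [apF, ← heq, ← hbt, Finset.sort_toFinset]
  refine ⟨d, hd, b, ?_, ?_, hX⟩
  · have hbX : b ∈ X := by
      rw [← Finset.mem_sort (· ≤ ·), hbt]; simp
    exact (Finset.mem_Icc.mp (hsub hbX)).1
  · have : b + (m - 1) * d ∈ X := by
      rw [hX, apF, List.mem_toFinset, mem_apL]
      exact ⟨m - 1, by omega, rfl⟩
    exact (Finset.mem_Icc.mp (hsub this)).2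

lemma apF_subset {n m a d : ℕ} (ha : 1 ≤ a) (hle : a + (m - 1) * d ≤ n) :
    apF a d m ⊆ Finset.Icc 1 n := by
  intro x hx
  rw [apF, List.mem_toFinset, mem_apL] at hx
  obtain ⟨j, hj, rfl⟩ := hx
  have : j * d ≤ (m - 1) * d := Nat.mul_le_mul_right d (by omega)
  rw [Finset.mem_Icc]
  omega

end Aux2

section Aux3
open Finset

open scoped Classical in
noncomputable def perSets (n m : ℕ) : Finset (Finset ℕ) :=
  ((Finset.Icc 1 n).powersetCard m).filter PeriodicSet

lemma perSets_eq (n m : ℕ) (hm : 2 ≤ m) :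
    perSets n m = (Finset.Icc 1 ((n - 1) / (m - 1))).biUnion
      (fun d => (Finset.Icc 1 (n - (m - 1) * d)).image (fun a => apF a d m)) := by
  classical
  have hm1 : 0 < m - 1 := by omega
  ext X
  simp only [perSets, Finset.mem_filter, Finset.mem_powersetCard, Finset.mem_biUnion,
    Finset.mem_image, Finset.mem_Icc]
  constructor
  · rintro ⟨⟨hsub, hcard⟩, hper⟩
    obtain ⟨d, hd, a, ha, hle, hX⟩ := periodic_char hm X hsub hcard hper
    have hdD : d ≤ (n - 1) / (m - 1) := by
      rw [Nat.le_div_iff_mul_le hm1, Nat.mul_comm]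
      omega
    exact ⟨d, ⟨hd, hdD⟩, a, ⟨ha, by omega⟩, hX.symm⟩
  · rintro ⟨d, ⟨hd1, hdD⟩, a, ⟨ha1, ha2⟩, rfl⟩
    have hmd : (m - 1) * d ≤ n - 1 := by
      have := (Nat.le_div_iff_mul_le hm1).mp hdD
      omega
    have hle : a + (m - 1) * d ≤ n := by omega
    exact ⟨⟨apF_subset ha1 hle, apF_card a d m hd1⟩, apF_periodic a d m hd1 hm⟩

lemma card_perSets (n m : ℕ) (hm : 2 ≤ m) :
    (perSets n m).card = ∑ d ∈ Finset.Icc 1 ((n - 1) / (m - 1)), (n - (m - 1) * d) := by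
  rw [perSets_eq n m hm, Finset.card_biUnion]
  · refine Finset.sum_congr rfl (fun d hd => ?_)
    have hd1 : 0 < d := by simp [Finset.mem_Icc] at hd; omega
    rw [Finset.card_image_of_injOn, Nat.card_Icc]
    · omega
    · intro a _ a' _ h
      exact (apF_inj hd1 hd1 hm h).1
  · intro d hd d' hd' hne
    have hd1 : 0 < d := by simp [Finset.mem_Icc] at hd; omega
    have hd1' : 0 < d' := by simp [Finset.mem_Icc] at hd'; omega
    rw [Function.onFun, Finset.disjoint_left]
    rintro X hX hX'
    simp only [Finset.mem_image] at hX hX'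
    obtain ⟨a, _, rfl⟩ := hX
    obtain ⟨a', _, h⟩ := hX'
    exact hne ((apF_inj hd1' hd1 hm h).2.symm)

lemma gauss_Icc (D : ℕ) : 2 * ∑ d ∈ Finset.Icc 1 D, d = D * (D + 1) := by
  induction D with
  | zero => simp
  | succ k ih =>
    rw [Finset.sum_Icc_succ_top (by omega), Nat.mul_add, ih]
    ring

lemma arith (n m' : ℕ) (h1 : 1 ≤ m') (h2 : m' + 2 ≤ n) :
    2 * ∑ d ∈ Finset.Icc 1 ((n - 1) / m'), (n - m' * d) =
      n / m' * (n % m' + (n - m')) := by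
  set q := n / m' with hq
  set r := n % m' with hr
  set D := (n - 1) / m' with hD
  have hnqr : m' * q + r = n := Nat.div_add_mod n m'
  have hrm : r < m' := Nat.mod_lt _ (by omega)
  have hbound : ∀ d ∈ Finset.Icc 1 D, m' * d ≤ n - 1 := by
    intro d hd
    rw [Finset.mem_Icc] at hd
    calc m' * d = d * m' := Nat.mul_comm _ _
      _ ≤ n - 1 := (Nat.le_div_iff_mul_le (show 0 < m' by omega)).mp hd.2
  have cast_sum : ((∑ d ∈ Finset.Icc 1 D, (n - m' * d) : ℕ) : ℤ) =
      ∑ d ∈ Finset.Icc 1 D, ((n : ℤ) - m' * d) := by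
    rw [Nat.cast_sum]
    refine Finset.sum_congr rfl (fun d hd => ?_)
    have := hbound d hd
    push_cast [Nat.cast_sub (show m' * d ≤ n by omega)]
    ring
  have hg : (2 : ℤ) * ∑ d ∈ Finset.Icc 1 D, (d : ℤ) = (D : ℤ) * (D + 1) := by
    have h := congrArg (Nat.cast : ℕ → ℤ) (gauss_Icc D)
    push_cast at h
    linarith [h]
  have key : (2 : ℤ) * ∑ d ∈ Finset.Icc 1 D, ((n : ℤ) - m' * d) =
      2 * D * n - m' * (D * (D + 1)) := by
    rw [Finset.sum_sub_distrib, ← Finset.mul_sum, Finset.sum_const, Nat.card_Icc,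
      Nat.add_sub_cancel, nsmul_eq_mul]
    linear_combination (-(m' : ℤ)) * hg
  apply @Nat.cast_injective ℤ
  rw [Nat.cast_mul, cast_sum]
  push_cast [Nat.cast_sub (show m' ≤ n by omega)]
  rw [key]
  have hz : (m' : ℤ) * q + r = n := by exact_mod_cast hnqr
  rcases Nat.eq_zero_or_pos r with hr0 | hrpos
  · have hq1 : 1 ≤ q := by
      rw [hq]
      exact Nat.one_le_div_iff (by omega) |>.mpr (by omega)
    obtain ⟨Q, hQ⟩ : ∃ Q, q = Q + 1 := ⟨q - 1, by omega⟩
    have hDq : D = Q := by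
      have hmq : m' * q = m' * Q + m' := by rw [hQ]; ring
      have hn1 : n - 1 = (m' - 1) + m' * Q := by omega
      rw [hD, hn1, Nat.add_mul_div_left _ _ (show 0 < m' by omega),
        Nat.div_eq_of_lt (by omega)]
      omega
    rw [hDq, hQ, hr0]
    have hz' : (m' : ℤ) * (Q + 1) = n := by
      rw [hQ] at hz; push_cast at hz ⊢; omega
    push_cast
    linear_combination ((1 : ℤ) - Q) * hz'
  · have hDq : D = q := by
      have hn1 : n - 1 = (r - 1) + m' * q := by omega
      rw [hD, hn1, Nat.add_mul_div_left _ _ (show 0 < m' by omega),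
        Nat.div_eq_of_lt (by omega)]
      omega
    rw [hDq]
    linear_combination (-(q : ℤ)) * hz

end Aux3

theorem stmt5 (n i : ℕ) (hi : 1 ≤ i) (hin : i ≤ n - 2) :
    2 * Nat.card {u : List ℕ | u.length = i ∧ u.Nodup ∧ (∀ x ∈ u, x ∈ Finset.Icc 1 n) ∧
        PeriodicSet (Finset.Icc 1 n \ u.toFinset)} =
      (n / (n - i - 1)) * (n % (n - i - 1) + i + 1) * Nat.factorial i := by
  classical
  have hn3 : i + 2 ≤ n := by omega
  set m := n - i with hmdef
  have hm2 : 2 ≤ m := by omega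
  have hIcc : (Finset.Icc 1 n).card = n := by rw [Nat.card_Icc]; omega
  set F : Finset (List ℕ) := (perSets n m).biUnion
    (fun X => ((Finset.Icc 1 n \ X).sort (· ≤ ·)).permutations.toFinset) with hF
  have hset : {u : List ℕ | u.length = i ∧ u.Nodup ∧ (∀ x ∈ u, x ∈ Finset.Icc 1 n) ∧
      PeriodicSet (Finset.Icc 1 n \ u.toFinset)} = ↑F := by
    ext u
    simp only [Set.mem_setOf_eq, hF, Finset.coe_biUnion, Set.mem_iUnion, Finset.mem_coe,
      List.mem_toFinset, List.mem_permutations]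
    constructor
    · rintro ⟨hlen, hnd, hmem, hper⟩
      have hsub : u.toFinset ⊆ Finset.Icc 1 n := fun x hx => hmem x (List.mem_toFinset.mp hx)
      have hcardu : u.toFinset.card = i := by rw [List.toFinset_card_of_nodup hnd, hlen]
      have hXcard : (Finset.Icc 1 n \ u.toFinset).card = m := by
        rw [Finset.card_sdiff_of_subset hsub, hIcc, hcardu]
      have hXmem : (Finset.Icc 1 n \ u.toFinset) ∈ perSets n m := by
        rw [perSets, Finset.mem_filter, Finset.mem_powersetCard]
        exact ⟨⟨Finset.sdiff_subset, hXcard⟩, hper⟩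
      refine ⟨_, hXmem, ?_⟩
      have hcomp : Finset.Icc 1 n \ (Finset.Icc 1 n \ u.toFinset) = u.toFinset :=
        sdiff_sdiff_eq_self hsub
      rw [hcomp]
      exact List.perm_of_nodup_nodup_toFinset_eq hnd (Finset.sort_nodup _ _)
        (by rw [Finset.sort_toFinset])
    · rintro ⟨X, hX, hu⟩
      rw [perSets, Finset.mem_filter, Finset.mem_powersetCard] at hX
      obtain ⟨⟨hsub, hcard⟩, hper⟩ := hX
      have hnd : u.Nodup := hu.nodup_iff.mpr (Finset.sort_nodup _ _)
      have htF : u.toFinset = Finset.Icc 1 n \ X := by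
        rw [List.toFinset_eq_of_perm _ _ hu, Finset.sort_toFinset]
      have hlen : u.length = i := by
        rw [hu.length_eq, Finset.length_sort, Finset.card_sdiff_of_subset hsub, hIcc, hcard]
        omega
      refine ⟨hlen, hnd, fun x hx => ?_, ?_⟩
      · have hx' : x ∈ u.toFinset := List.mem_toFinset.mpr hx
        rw [htF] at hx'
        exact (Finset.mem_sdiff.mp hx').1
      · rw [htF, sdiff_sdiff_eq_self hsub]
        exact hper
  have hFcard : F.card = (perSets n m).card * i.factorial := by
    rw [hF, Finset.card_biUnion]
    · have hc : ∀ X ∈ perSets n m,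
          (((Finset.Icc 1 n \ X).sort (· ≤ ·)).permutations.toFinset).card = i.factorial := by
        intro X hX
        rw [perSets, Finset.mem_filter, Finset.mem_powersetCard] at hX
        obtain ⟨⟨hsub, hcard⟩, -⟩ := hX
        rw [List.toFinset_card_of_nodup (List.nodup_permutations _ (Finset.sort_nodup _ _)),
          List.length_permutations, Finset.length_sort, Finset.card_sdiff_of_subset hsub, hIcc, hcard,
          show n - m = i by omega]
      rw [Finset.sum_congr rfl hc, Finset.sum_const, smul_eq_mul]
    · intro X hX Y hY hne
      rw [perSets, Finset.mem_coe, Finset.mem_filter, Finset.mem_powersetCard] at hX hY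
      rw [Function.onFun, Finset.disjoint_left]
      intro u huX huY
      rw [List.mem_toFinset, List.mem_permutations] at huX huY
      have h1 : Finset.Icc 1 n \ X = Finset.Icc 1 n \ Y := by
        rw [← Finset.sort_toFinset (r := (· ≤ ·)) (s := Finset.Icc 1 n \ X),
          ← Finset.sort_toFinset (r := (· ≤ ·)) (s := Finset.Icc 1 n \ Y),
          ← List.toFinset_eq_of_perm _ _ huX, ← List.toFinset_eq_of_perm _ _ huY]
      apply hne
      rw [← sdiff_sdiff_eq_self hX.1.1, h1, sdiff_sdiff_eq_self hY.1.1]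
  have e1 : m - 1 = n - i - 1 := by omega
  have e2 : n - (m - 1) = i + 1 := by omega
  have harith := arith n (m - 1) (by omega) (by omega)
  calc 2 * Nat.card {u : List ℕ | u.length = i ∧ u.Nodup ∧ (∀ x ∈ u, x ∈ Finset.Icc 1 n) ∧
        PeriodicSet (Finset.Icc 1 n \ u.toFinset)}
      = 2 * F.card := by rw [hset, Nat.card_coe_set_eq, Set.ncard_coe_finset]
    _ = (2 * (perSets n m).card) * i.factorial := by rw [hFcard]; ring
    _ = (n / (n - i - 1)) * (n % (n - i - 1) + i + 1) * i.factorial := by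
        rw [card_perSets n m hm2, harith, e1, e2]
        ring
end

section
/- The numbers a_m of non-interval permutations of size m satisfy the recurrence ∑_{k=1}^{i} a_{k+1}·(i-k+1)! = (i+1)! for all i ≥ 1. -/
noncomputable def permsOf (S : Finset ℕ) : Finset (List ℕ) :=
  (S.sort (· ≤ ·)).permutations.toFinset

lemma mem_permsOf {S : Finset ℕ} {l : List ℕ} :
    l ∈ permsOf S ↔ l.Nodup ∧ l.toFinset = S := by
  constructor
  · intro h
    rw [permsOf, List.mem_toFinset, List.mem_permutations] at h
    exact ⟨h.nodup_iff.mpr (Finset.sort_nodup _ _),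
      by rw [List.toFinset_eq_of_perm _ _ h, Finset.sort_toFinset]⟩
  · intro ⟨h1, h2⟩
    rw [permsOf, List.mem_toFinset, List.mem_permutations]
    exact List.perm_of_nodup_nodup_toFinset_eq h1 (Finset.sort_nodup _ _)
      (by rw [h2, Finset.sort_toFinset])

lemma card_permsOf (S : Finset ℕ) : (permsOf S).card = S.card.factorial := by
  rw [permsOf, List.toFinset_card_of_nodup (List.nodup_permutations _ (Finset.sort_nodup _ _)),
    List.length_permutations, Finset.length_sort]

lemma toFinset_drop {s : List ℕ} (h : s.Nodup) (m : ℕ) :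
    (s.drop m).toFinset = s.toFinset \ (s.take m).toFinset := by
  ext x
  simp only [List.mem_toFinset, Finset.mem_sdiff]
  constructor
  · intro hx
    refine ⟨?_, fun hx' => ?_⟩
    · exact (List.take_append_drop m s) ▸ List.mem_append_right _ hx
    · exact (List.disjoint_take_drop h le_rfl) hx' hx
  · rintro ⟨hx, hx'⟩
    have : x ∈ s.take m ++ s.drop m := by rw [List.take_append_drop]; exact hx
    rcases List.mem_append.mp this with h' | h'
    · exact absurd h' hx'
    · exact h'

lemma list_toFinset_map (l : List ℕ) (f : ℕ → ℕ) :
    (l.map f).toFinset = l.toFinset.image f := by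
  ext x; simp

lemma image_shift_up {a k : ℕ} (ha : 1 ≤ a) :
    Finset.image (· + (a - 1)) (Finset.Icc 1 (k + 1)) = Finset.Icc a (a + k) := by
  ext x
  simp only [Finset.mem_image, Finset.mem_Icc]
  constructor
  · rintro ⟨y, hy, rfl⟩; omega
  · intro hx; exact ⟨x - (a - 1), by omega, by omega⟩

lemma take_map_interval {t : List ℕ} {c l b : ℕ} (hl : 1 ≤ l)
    (h : (t.take l).toFinset = Finset.Icc b (b + l - 1)) :
    ((t.map (· + c)).take l).toFinset = Finset.Icc (b + c) (b + c + l - 1) := by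
  rw [← List.map_take, list_toFinset_map, h, Finset.image_add_right_Icc]
  congr 1
  omega

lemma take_map_interval_down {t : List ℕ} {c l b : ℕ} (hl : 1 ≤ l)
    (ht : ∀ x ∈ t, 1 ≤ x)
    (h : ((t.map (· + c)).take l).toFinset = Finset.Icc b (b + l - 1)) :
    (t.take l).toFinset = Finset.Icc (b - c) (b - c + l - 1) := by
  rw [← List.map_take, list_toFinset_map] at h
  have hb : c + 1 ≤ b := by
    have hm : b ∈ Finset.Icc b (b + l - 1) := by simp only [Finset.mem_Icc]; omega
    rw [← h] at hm
    obtain ⟨x, hx, hxe⟩ := Finset.mem_image.mp hm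
    have := ht x (List.mem_of_mem_take (List.mem_toFinset.mp hx))
    omega
  ext y
  simp only [List.mem_toFinset, Finset.mem_Icc]
  constructor
  · intro hy
    have hm : y + c ∈ Finset.Icc b (b + l - 1) := by
      rw [← h]; exact Finset.mem_image.mpr ⟨y, List.mem_toFinset.mpr hy, rfl⟩
    simp only [Finset.mem_Icc] at hm; omega
  · intro hy
    have hm : y + c ∈ Finset.image (· + c) (t.take l).toFinset := by
      rw [h]; simp only [Finset.mem_Icc]; omega
    obtain ⟨x, hx, hxe⟩ := Finset.mem_image.mp hm
    have hxy : x = y := by omega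
    subst hxy; exact List.mem_toFinset.mp hx

lemma image_shift_down {a k : ℕ} (ha : 1 ≤ a) :
    Finset.image (· - (a - 1)) (Finset.Icc a (a + k)) = Finset.Icc 1 (k + 1) := by
  ext x
  simp only [Finset.mem_image, Finset.mem_Icc]
  constructor
  · rintro ⟨y, hy, rfl⟩; omega
  · intro hx; exact ⟨x + (a - 1), by omega, by omega⟩

open scoped Classical in
noncomputable def NI (m : ℕ) : Finset (List ℕ) :=
  Finset.filter (IsNonIntervalPerm m) (permsOf (Finset.Icc 1 m))

open scoped Classical in
noncomputable def ClassKA (i k a : ℕ) : Finset (List ℕ) :=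
  Finset.filter
    (fun s => (s.take (k + 1)).toFinset = Finset.Icc a (a + k) ∧
      ∀ l, 2 ≤ l → l ≤ k → ¬∃ b, (s.take l).toFinset = Finset.Icc b (b + l - 1))
    (permsOf (Finset.Icc 1 (i + 1)))

open scoped Classical in
lemma mem_ClassKA {i k a : ℕ} {s : List ℕ} :
    s ∈ ClassKA i k a ↔ (s.Nodup ∧ s.toFinset = Finset.Icc 1 (i + 1)) ∧
      (s.take (k + 1)).toFinset = Finset.Icc a (a + k) ∧
      ∀ l, 2 ≤ l → l ≤ k → ¬∃ b, (s.take l).toFinset = Finset.Icc b (b + l - 1) := by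
  rw [ClassKA, Finset.mem_filter, mem_permsOf]

lemma card_ClassKA (i k a : ℕ) (hki : k ≤ i) (ha : 1 ≤ a) (hai : a + k ≤ i + 1) :
    (ClassKA i k a).card = (NI (k + 1)).card * (i - k).factorial := by
  classical
  set C : Finset ℕ := Finset.Icc 1 (i + 1) \ Finset.Icc a (a + k) with hC
  have hsub : Finset.Icc a (a + k) ⊆ Finset.Icc 1 (i + 1) := by
    intro x hx; simp only [Finset.mem_Icc] at *; omega
  have hcardC : C.card = i - k := by
    rw [hC, Finset.card_sdiff_of_subset hsub, Nat.card_Icc, Nat.card_Icc]; omega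
  rw [← hcardC, ← card_permsOf, ← Finset.card_product]
  apply Finset.card_bij'
    (i := fun s _ => (((s.take (k + 1)).map (· - (a - 1)) : List ℕ), s.drop (k + 1)))
    (j := fun p _ => p.1.map (· + (a - 1)) ++ p.2)
  -- membership forward
  · intro s hs
    obtain ⟨⟨hnd, htf⟩, htake, hmin⟩ := mem_ClassKA.mp hs
    have hslen : s.length = i + 1 := by
      rw [← List.toFinset_card_of_nodup hnd, htf, Nat.card_Icc]; omega
    have hplen : (s.take (k + 1)).length = k + 1 := by
      rw [List.length_take, hslen]; omega
    have hpmem : ∀ x ∈ s.take (k + 1), a ≤ x ∧ x ≤ a + k := by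
      intro x hx
      have : x ∈ Finset.Icc a (a + k) := htake ▸ List.mem_toFinset.mpr hx
      simpa [Finset.mem_Icc] using this
    have hpid : (s.take (k + 1)).map (fun x => x - (a - 1) + (a - 1)) = s.take (k + 1) := by
      refine (List.map_congr_left fun x hx => ?_).trans (List.map_id _)
      have := hpmem x hx
      simp only [id_eq]; omega
    rw [Finset.mem_product]
    constructor
    · rw [NI, Finset.mem_filter, mem_permsOf]
      have hnt : ((s.take (k + 1)).map (· - (a - 1))).Nodup := by
        refine List.Nodup.map_on ?_ (((List.take_sublist _ _)).nodup hnd)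
        intro x hx y hy hxy
        have h1 := hpmem x hx; have h2 := hpmem y hy; omega
      have httf : ((s.take (k + 1)).map (· - (a - 1))).toFinset = Finset.Icc 1 (k + 1) := by
        rw [list_toFinset_map, htake, image_shift_down ha]
      refine ⟨⟨hnt, httf⟩, ⟨?_, ?_⟩⟩
      · exact ⟨by rw [List.length_map, hplen], hnt, httf⟩
      · rintro l hl2 hlk ⟨b, hb⟩
        have hup := take_map_interval (c := a - 1) (by omega : 1 ≤ l) hb
        rw [List.map_map] at hup
        have : (s.take (k + 1)).map ((· + (a - 1)) ∘ (· - (a - 1))) = s.take (k + 1) := hpid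
        rw [this, List.take_take, min_eq_left (by omega : l ≤ k + 1)] at hup
        exact hmin l hl2 (by omega) ⟨b + (a - 1), hup⟩
    · rw [mem_permsOf]
      refine ⟨(List.drop_sublist _ _).nodup hnd, ?_⟩
      rw [toFinset_drop hnd, htf, htake]
  -- membership backward
  · rintro ⟨t, r⟩ hp
    rw [Finset.mem_product] at hp
    obtain ⟨ht, hr⟩ := hp
    rw [NI, Finset.mem_filter, mem_permsOf] at ht
    rw [mem_permsOf] at hr
    obtain ⟨⟨hnt, httf⟩, ⟨⟨htlen, _, _⟩, htni⟩⟩ := ht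
    obtain ⟨hnr, hrtf⟩ := hr
    have hulen : (t.map (· + (a - 1))).length = k + 1 := by rw [List.length_map, htlen]
    have hutf : (t.map (· + (a - 1))).toFinset = Finset.Icc a (a + k) := by
      rw [list_toFinset_map, httf, image_shift_up ha]
    rw [mem_ClassKA]
    refine ⟨⟨?_, ?_⟩, ?_, ?_⟩
    · refine List.Nodup.append (hnt.map fun x y => by omega) hnr ?_
      intro x hxu hxr
      have h1 : x ∈ Finset.Icc a (a + k) := hutf ▸ List.mem_toFinset.mpr hxu
      have h2 : x ∈ C := hrtf ▸ List.mem_toFinset.mpr hxr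
      rw [hC, Finset.mem_sdiff] at h2
      exact h2.2 h1
    · rw [List.toFinset_append, hutf, hrtf, hC, Finset.union_sdiff_of_subset hsub]
    · rw [List.take_left' hulen, hutf]
    · rintro l hl2 hlk ⟨b, hb⟩
      rw [List.take_append_of_le_length (by omega : l ≤ (t.map (· + (a - 1))).length)] at hb
      have hdown := take_map_interval_down (by omega : 1 ≤ l)
        (fun x hx => by
          have : x ∈ Finset.Icc 1 (k + 1) := httf ▸ List.mem_toFinset.mpr hx
          simp only [Finset.mem_Icc] at this; omega) hb
      exact htni l hl2 (by omega) ⟨b - (a - 1), hdown⟩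
  -- left inverse
  · intro s hs
    obtain ⟨⟨hnd, htf⟩, htake, hmin⟩ := mem_ClassKA.mp hs
    have hpmem : ∀ x ∈ s.take (k + 1), a ≤ x ∧ x ≤ a + k := by
      intro x hx
      have : x ∈ Finset.Icc a (a + k) := htake ▸ List.mem_toFinset.mpr hx
      simpa [Finset.mem_Icc] using this
    rw [List.map_map]
    have hpid : (s.take (k + 1)).map ((· + (a - 1)) ∘ (· - (a - 1))) = s.take (k + 1) := by
      refine (List.map_congr_left fun x hx => ?_).trans (List.map_id _)
      have := hpmem x hx
      simp only [id_eq, Function.comp_apply]; omega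
    rw [hpid, List.take_append_drop]
  -- right inverse
  · rintro ⟨t, r⟩ hp
    rw [Finset.mem_product] at hp
    rw [NI, Finset.mem_filter, mem_permsOf] at hp
    have htlen : (t.map (· + (a - 1))).length = k + 1 := by
      rw [List.length_map, hp.1.2.1.1]
    rw [List.take_left' htlen, List.drop_left' htlen, List.map_map]
    refine Prod.ext ?_ rfl
    show t.map ((· - (a - 1)) ∘ (· + (a - 1))) = t
    exact List.map_id'' (fun x => by simp only [Function.comp_apply]; omega) t

lemma ClassKA_subset (i k a : ℕ) : ClassKA i k a ⊆ permsOf (Finset.Icc 1 (i + 1)) := by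
  intro s hs
  rw [mem_permsOf]
  exact (mem_ClassKA.mp hs).1

lemma take_toFinset_subset (s : List ℕ) (m : ℕ) : (s.take m).toFinset ⊆ s.toFinset :=
  fun x hx => List.mem_toFinset.mpr (List.mem_of_mem_take (List.mem_toFinset.mp hx))

lemma perms_eq_biUnion (i : ℕ) (hi : 1 ≤ i) :
    permsOf (Finset.Icc 1 (i + 1)) =
      (Finset.Icc 1 i).biUnion
        (fun k => (Finset.Icc 1 (i - k + 1)).biUnion (fun a => ClassKA i k a)) := by
  classical
  ext s
  simp only [Finset.mem_biUnion]
  constructor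
  · intro hs
    obtain ⟨hnd, htf⟩ := mem_permsOf.mp hs
    have hslen : s.length = i + 1 := by
      rw [← List.toFinset_card_of_nodup hnd, htf, Nat.card_Icc]; omega
    set Q : ℕ → Prop := fun n => ∃ b, (s.take (n + 2)).toFinset = Finset.Icc b (b + (n + 1))
      with hQdef
    have hQ : Q (i - 1) := by
      refine ⟨1, ?_⟩
      rw [show i - 1 + 2 = i + 1 by omega, List.take_of_length_le (by omega), htf]
      congr 1
      omega
    have hfind := Nat.find_spec ⟨i - 1, hQ⟩
    have hfle : Nat.find ⟨i - 1, hQ⟩ ≤ i - 1 := Nat.find_le hQ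
    set n0 := Nat.find (⟨i - 1, hQ⟩ : ∃ n, Q n) with hn0
    obtain ⟨b, hb⟩ := hfind
    set k := n0 + 1 with hk
    have hbk : (s.take (k + 1)).toFinset = Finset.Icc b (b + k) := hb
    have hb1 : 1 ≤ b ∧ b + k ≤ i + 1 := by
      have h1 : b ∈ Finset.Icc 1 (i + 1) := by
        rw [← htf]
        exact take_toFinset_subset s (k + 1) (hbk ▸ (by simp [Finset.mem_Icc]))
      have h2 : b + k ∈ Finset.Icc 1 (i + 1) := by
        rw [← htf]
        exact take_toFinset_subset s (k + 1) (hbk ▸ (by simp [Finset.mem_Icc]))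
      simp only [Finset.mem_Icc] at h1 h2
      omega
    refine ⟨k, by simp only [Finset.mem_Icc]; omega, b,
      by simp only [Finset.mem_Icc]; omega, ?_⟩
    rw [mem_ClassKA]
    refine ⟨⟨hnd, htf⟩, hbk, ?_⟩
    rintro l hl2 hlk ⟨c, hc⟩
    have hQl : Q (l - 2) := by
      refine ⟨c, ?_⟩
      rw [show l - 2 + 2 = l by omega]
      rw [hc]
      congr 1
      omega
    exact Nat.find_min ⟨i - 1, hQ⟩ (by omega : l - 2 < n0) hQl
  · rintro ⟨k, _, a, _, hs⟩
    exact ClassKA_subset i k a hs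

lemma ClassKA_disjoint_a (i k : ℕ) {a a' : ℕ} (h : a ≠ a') :
    Disjoint (ClassKA i k a) (ClassKA i k a') := by
  rw [Finset.disjoint_left]
  intro s h1 h2
  have e1 := (mem_ClassKA.mp h1).2.1
  have e2 := (mem_ClassKA.mp h2).2.1
  apply h
  have m1 : a ∈ Finset.Icc a' (a' + k) := by
    rw [← e2, e1]; simp [Finset.mem_Icc]
  have m2 : a' ∈ Finset.Icc a (a + k) := by
    rw [← e1, e2]; simp [Finset.mem_Icc]
  simp only [Finset.mem_Icc] at m1 m2
  omega

lemma ClassKA_disjoint_k (i : ℕ) {k k' : ℕ} (hk : 1 ≤ k) (hk' : 1 ≤ k') (h : k ≠ k') :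
    Disjoint ((Finset.Icc 1 (i - k + 1)).biUnion (fun a => ClassKA i k a))
      ((Finset.Icc 1 (i - k' + 1)).biUnion (fun a => ClassKA i k' a)) := by
  rw [Finset.disjoint_left]
  intro s h1 h2
  simp only [Finset.mem_biUnion] at h1 h2
  obtain ⟨a, _, h1⟩ := h1
  obtain ⟨a', _, h2⟩ := h2
  obtain ⟨_, e1, _⟩ := mem_ClassKA.mp h1
  obtain ⟨_, e2, m2⟩ := mem_ClassKA.mp h2
  rcases Nat.lt_or_ge k k' with hlt | hge
  · refine m2 (k + 1) (by omega) (by omega) ⟨a, ?_⟩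
    rw [e1]; congr 1
  · obtain ⟨_, _, m1⟩ := mem_ClassKA.mp h1
    refine m1 (k' + 1) (by omega) (by omega) ⟨a', ?_⟩
    rw [e2]; congr 1

lemma main_count (i : ℕ) (hi : 1 ≤ i) :
    ∑ k ∈ Finset.Icc 1 i, (NI (k + 1)).card * (i - k + 1).factorial =
      (i + 1).factorial := by
  classical
  have h1 : (permsOf (Finset.Icc 1 (i + 1))).card = (i + 1).factorial := by
    rw [card_permsOf, Nat.card_Icc]; congr 1
  rw [← h1, perms_eq_biUnion i hi, Finset.card_biUnion]
  · refine (Finset.sum_congr rfl fun k hk => ?_).symm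
    simp only [Finset.mem_Icc] at hk
    rw [Finset.card_biUnion (fun a _ a' _ h => ClassKA_disjoint_a i k h)]
    have : ∀ a ∈ Finset.Icc 1 (i - k + 1), (ClassKA i k a).card =
        (NI (k + 1)).card * (i - k).factorial := by
      intro a ha
      simp only [Finset.mem_Icc] at ha
      exact card_ClassKA i k a hk.2 ha.1 (by omega)
    rw [Finset.sum_congr rfl this, Finset.sum_const, Nat.card_Icc, smul_eq_mul,
      Nat.factorial_succ, Nat.add_sub_cancel]
    ring
  · intro k hk k' hk' h
    simp only [Finset.mem_coe, Finset.mem_Icc] at hk hk'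
    exact ClassKA_disjoint_k i hk.1 hk'.1 h

lemma mem_permsOf_Icc {n : ℕ} {l : List ℕ} :
    l ∈ permsOf (Finset.Icc 1 n) ↔ IsPermList n l := by
  rw [mem_permsOf, IsPermList]
  constructor
  · rintro ⟨h1, h2⟩
    refine ⟨?_, h1, h2⟩
    rw [← List.toFinset_card_of_nodup h1, h2, Nat.card_Icc]; omega
  · rintro ⟨_, h1, h2⟩; exact ⟨h1, h2⟩

lemma card_NI (m : ℕ) : Nat.card {s : List ℕ | IsNonIntervalPerm m s} = (NI m).card := by
  have h : {s : List ℕ | IsNonIntervalPerm m s} = ↑(NI m) := by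
    ext s
    simp only [Set.mem_setOf_eq, NI, Finset.coe_filter, Set.mem_setOf_eq, mem_permsOf_Icc]
    exact ⟨fun h => ⟨h.1, h⟩, fun h => h.2⟩
  rw [h, Nat.card_coe_set_eq, Set.ncard_coe_finset]

theorem stmt9 (i : ℕ) (hi : 1 ≤ i) :
    ∑ k ∈ Finset.Icc 1 i,
        Nat.card {s : List ℕ | IsNonIntervalPerm (k + 1) s} * Nat.factorial (i - k + 1) =
      Nat.factorial (i + 1) := by
  rw [← main_count i hi]
  exact Finset.sum_congr rfl fun k _ => by rw [card_NI]
end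

section
/- For every pyramidal sequence of vectors p = (Δ_1, ..., Δ_{n-1}) (with Δ_1 = (1,...,1) of length n-1 and each transition being either the merging of two adjacent entries or deletion of the leftmost or rightmost entry), there exists a permutation u ∈ S_n such that the pyramidal sequence of consecutive differences of s = u^{-1} equals p, i.e., Δ_i(s) = Δ_i for all i ∈ [n-1]. -/
namespace Stmt13Aux

lemma diffs_single (a : ℕ) : diffs [a] = [] := rfl

lemma diffs_cons_cons (a b : ℕ) (r : List ℕ) :
    diffs (a :: b :: r) = (b - a) :: diffs (b :: r) := rfl

lemma diffs_dropLast : ∀ l : List ℕ, diffs l.dropLast = (diffs l).dropLast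
  | [] => rfl
  | [a] => rfl
  | [a, b] => rfl
  | a :: b :: c :: t => by
    have ih := diffs_dropLast (b :: c :: t)
    show diffs (a :: (b :: c :: t).dropLast) = ((b - a) :: diffs (b :: c :: t)).dropLast
    have hne : (b :: c :: t).dropLast = b :: (c :: t).dropLast := rfl
    rw [hne, diffs_cons_cons, ← hne, ih]
    have h2 : diffs (b :: c :: t) = (c - b) :: diffs (c :: t) := rfl
    rw [h2]
    rfl

/-- Merge case: removing an interior element realizes the merge step. -/
lemma merge_case : ∀ (l : List ℕ) (L : List ℕ), L.Pairwise (· < ·) → ∀ a b r,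
    diffs L = l ++ a :: b :: r →
    ∃ x M, L.Perm (x :: M) ∧ M.Pairwise (· < ·) ∧ diffs M = l ++ (a + b) :: r ∧
      M.head? = L.head? := by
  intro l
  induction l with
  | nil =>
    intro L hL a b r hd
    match L with
    | [] => simp [diffs] at hd
    | [p] => simp [diffs] at hd
    | [p, q] => simp [diffs_cons_cons, diffs_single] at hd
    | p :: q :: s :: t =>
      rw [diffs_cons_cons, diffs_cons_cons, List.nil_append] at hd
      obtain ⟨h1, h2, h3⟩ : q - p = a ∧ s - q = b ∧ diffs (s :: t) = r := by
        simpa using hd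
      have hpq : p < q := (List.pairwise_cons.mp hL).1 _ (by simp)
      have hqs : q < s := ((List.pairwise_cons.mp (List.pairwise_cons.mp hL).2).1) _ (by simp)
      refine ⟨q, p :: s :: t, List.Perm.swap q p _, ?_, ?_, rfl⟩
      · have h4 := (List.pairwise_cons.mp hL).1
        have h5 := (List.pairwise_cons.mp (List.pairwise_cons.mp hL).2).2
        rw [List.pairwise_cons]
        refine ⟨?_, h5⟩
        intro y hy
        rcases List.mem_cons.mp hy with h | h
        · omega
        · exact h4 y (by simp [h])
      · rw [diffs_cons_cons, h3]
        have : s - p = a + b := by omega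
        simp [this]
  | cons d l' ih =>
    intro L hL a b r hd
    match L with
    | [] => simp [diffs] at hd
    | [p] => simp [diffs] at hd
    | p :: q :: t =>
      rw [diffs_cons_cons] at hd
      obtain ⟨h1, h2⟩ : q - p = d ∧ diffs (q :: t) = l' ++ a :: b :: r := by
        simpa using hd
      obtain ⟨x, M', hperm, hMs, hMd, hMh⟩ :=
        ih (q :: t) (List.pairwise_cons.mp hL).2 a b r h2
      match M' with
      | [] => simp at hMh
      | m :: M'' =>
        simp only [List.head?_cons] at hMh
        obtain rfl : m = q := by simpa using hMh
        refine ⟨x, p :: m :: M'', ?_, ?_, ?_, rfl⟩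
        · exact (List.Perm.cons p hperm).trans (List.Perm.swap x p _)
        · rw [List.pairwise_cons]
          refine ⟨?_, hMs⟩
          intro y hy
          have hy2 : y ∈ m :: t := hperm.mem_iff.mpr (List.mem_cons_of_mem x hy)
          exact (List.pairwise_cons.mp hL).1 y hy2
        · rw [diffs_cons_cons, hMd, h1]
          rfl

/-- One pyramidal step can be realized by removing one element. -/
lemma step_realize (L : List ℕ) (hL : L.Pairwise (· < ·)) (w : List ℕ)
    (hstep : PyrStep (diffs L) w) :
    ∃ x M, L.Perm (x :: M) ∧ M.Pairwise (· < ·) ∧ diffs M = w := by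
  rcases hstep with ⟨l, a, b, r, h1, h2⟩ | ⟨a, r, h1, h2⟩ | ⟨l, a, h1, h2⟩
  · obtain ⟨x, M, hp, hs, hd, _⟩ := merge_case l L hL a b r h1
    exact ⟨x, M, hp, hs, h2 ▸ hd⟩
  · match L with
    | [] => simp [diffs] at h1
    | p :: t =>
      refine ⟨p, t, List.Perm.refl _, (List.pairwise_cons.mp hL).2, ?_⟩
      subst h2
      match t with
      | [] => simp [diffs] at h1
      | q :: t' =>
        rw [diffs_cons_cons] at h1
        exact (List.cons.injEq _ _ _ _ ▸ h1).2 ▸ rfl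
  · have hne : L ≠ [] := by rintro rfl; simp [diffs] at h1
    refine ⟨L.getLast hne, L.dropLast, ?_, hL.sublist (List.dropLast_sublist L), ?_⟩
    · conv_lhs => rw [← List.dropLast_append_getLast hne]
      exact List.perm_append_singleton _ _
    · rw [diffs_dropLast, h1, h2, List.dropLast_concat]

lemma build : ∀ (Q : List (List ℕ)) (L : List ℕ), L.Pairwise (· < ·) →
    L.length = Q.length + 1 →
    (∀ i, i + 1 < Q.length → PyrStep (Q.getD i []) (Q.getD (i+1) [])) →
    diffs L = Q.getD 0 [] →
    ∃ s : List ℕ, s.Perm L ∧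
      ∀ i, i < Q.length → diffs (((s.drop i).toFinset).sort (· ≤ ·)) = Q.getD i [] := by
  intro Q
  induction Q with
  | nil =>
    intro L hs _ _ _
    exact ⟨L, List.Perm.refl L, fun i hi => absurd hi (by simp)⟩
  | cons v Q' ih =>
    intro L hL hlen hsteps hd
    cases Q' with
    | nil =>
      refine ⟨L, List.Perm.refl L, ?_⟩
      intro i hi
      have hi0 : i = 0 := by simpa using hi
      subst hi0
      simp only [List.drop_zero, List.getD_cons_zero]
      rw [(List.toFinset_sort (· ≤ ·) hL.nodup).mpr (hL.imp le_of_lt)]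
      simpa using hd
    | cons w Q'' =>
      have hdv : diffs L = v := by simpa using hd
      have hstep0 : PyrStep (diffs L) w := by
        rw [hdv]
        simpa using hsteps 0 (by simp)
      obtain ⟨x, M, hperm, hMs, hMd⟩ := step_realize L hL w hstep0
      have hlenM : M.length = (w :: Q'').length + 1 := by
        have h := hperm.length_eq
        simp only [List.length_cons] at h hlen ⊢
        omega
      have hstepsM : ∀ i, i + 1 < (w :: Q'').length →
          PyrStep ((w :: Q'').getD i []) ((w :: Q'').getD (i+1) []) := by
        intro i hi
        have h := hsteps (i+1) (by simpa using Nat.succ_lt_succ hi)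
        simpa using h
      obtain ⟨s', hs'p, hs'⟩ := ih M hMs hlenM hstepsM (by simpa using hMd)
      refine ⟨x :: s', (hs'p.cons x).trans hperm.symm, ?_⟩
      intro i hi
      cases i with
      | zero =>
        simp only [List.drop_zero, List.getD_cons_zero]
        have hfs : (x :: s').toFinset = L.toFinset :=
          List.toFinset_eq_iff_perm_dedup.mpr (((hs'p.cons x).trans hperm.symm).dedup)
        rw [hfs, (List.toFinset_sort (· ≤ ·) hL.nodup).mpr (hL.imp le_of_lt)]
        exact hdv
      | succ j =>
        simp only [List.drop_succ_cons, List.getD_cons_succ]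
        exact hs' j (by simpa using hi)

lemma diffs_range' : ∀ (n a : ℕ), diffs (List.range' a n) = List.replicate (n - 1) 1
  | 0, a => rfl
  | 1, a => rfl
  | (n+2), a => by
    have ih := diffs_range' (n+1) (a+1)
    rw [List.range'_succ, List.range'_succ, diffs_cons_cons, ← List.range'_succ, ih]
    simp [List.replicate_succ]

lemma exists_inv (n : ℕ) (s : List ℕ) (hs : IsPermList n s) : ∃ u, InvPerm n u s := by
  obtain ⟨hlen, hnd, hfin⟩ := hs
  have hmem : ∀ j, j < n → (j+1) ∈ s := by
    intro j hj
    rw [← List.mem_toFinset, hfin, Finset.mem_Icc]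
    omega
  set f : ℕ → ℕ := fun j => s.idxOf (j+1) + 1 with hf
  have hidx : ∀ j, j < n → s.idxOf (j+1) < n := fun j hj =>
    hlen ▸ List.idxOf_lt_length_iff.mpr (hmem j hj)
  have hund : ((List.range n).map f).Nodup := by
    refine List.Nodup.map_on ?_ List.nodup_range
    intro a ha b hb hab
    simp only [List.mem_range] at ha hb
    have h1 : s.idxOf (a+1) = s.idxOf (b+1) := by
      simp only [hf] at hab; omega
    have := (List.idxOf_inj (hmem a ha)).mp h1
    omega
  refine ⟨(List.range n).map f, ⟨by simp, hund, ?_⟩, ⟨hlen, hnd, hfin⟩, ?_⟩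
  · apply Finset.eq_of_subset_of_card_le
    · intro y hy
      simp only [List.mem_toFinset, List.mem_map, List.mem_range] at hy
      obtain ⟨j, hj, rfl⟩ := hy
      have := hidx j hj
      simp only [Finset.mem_Icc, hf]
      omega
    · rw [Nat.card_Icc, List.toFinset_card_of_nodup hund]
      simp
  · intro j k hj hk
    have hu : ((List.range n).map f).getD j 0 = f j := by
      rw [List.getD_eq_getElem?_getD, List.getElem?_map, List.getElem?_range hj]
      rfl
    have hk' : k < s.length := hlen.symm ▸ hk
    have hsk : s.getD k 0 = s[k] := List.getD_eq_getElem s 0 hk'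
    rw [hu, hsk]
    constructor
    · intro h
      have h1 : s.idxOf (j+1) = k := by simp only [hf] at h; omega
      subst h1
      exact List.getElem_idxOf hk' 
    · intro h
      have h1 : s.idxOf (j+1) = k := by
        rw [← h]
        exact hnd.idxOf_getElem k hk'
      simp only [hf, h1]

end Stmt13Aux

theorem stmt13 (n : ℕ) (hn : 1 ≤ n) (P : List (List ℕ)) (hP : IsPyramidal n P) :
    ∃ u s, InvPerm n u s ∧ ∀ i, 1 ≤ i → i ≤ n - 1 → deltaVec s i = P.getD (i - 1) [] := by
  obtain ⟨hlen, h0, hsteps⟩ := hP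
  have hLsorted : (List.range' 1 n).Pairwise (· < ·) := by
    rw [List.pairwise_iff_getElem]
    intro i j hi hj hij
    simp only [List.getElem_range'_1]
    omega
  have hLfin : (List.range' 1 n).toFinset = Finset.Icc 1 n := by
    ext x
    simp only [List.mem_toFinset, List.mem_range'_1, Finset.mem_Icc]
    omega
  have hLlen : (List.range' 1 n).length = P.length + 1 := by
    simp [hlen]; omega
  obtain ⟨s, hsp, hprop⟩ := Stmt13Aux.build P (List.range' 1 n) hLsorted hLlen
    (fun i hi => hsteps i (by omega)) (by rw [h0, Stmt13Aux.diffs_range'])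
  have hsPerm : IsPermList n s :=
    ⟨hsp.length_eq.trans (by simp),
     hsp.nodup_iff.mpr hLsorted.nodup,
     (List.toFinset_eq_iff_perm_dedup.mpr hsp.dedup).trans hLfin⟩
  obtain ⟨u, hu⟩ := Stmt13Aux.exists_inv n s hsPerm
  refine ⟨u, s, hu, ?_⟩
  intro i h1 h2
  have hi : i - 1 < P.length := by omega
  exact hprop (i - 1) hi
end

section
/- For every u ∈ S_n, the set Π(u) = { t ∈ S_n : t is the inverse of some v ∈ S_n with Δ_i(v^{-1}) = Δ_i(u^{-1}) for all i ∈ [n-1] } has cardinality 2^j for some j ≥ 1; equivalently, the number of permutations v ∈ S_n whose pyramidal sequence of consecutive differences equals that of u is a power of 2. Moreover, j equals the number of indices i ∈ [n-1] such that Δ_i(u^{-1}) = (d,...,d) (n-i equal entries) and Δ_{i+1}(u^{-1}) = (d,...,d) (n-i-1 equal entries) for the same d, where Δ_n is by convention the empty vector. -/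
lemma diffs_length (l : List ℕ) : (diffs l).length = l.length - 1 := by
  simp [diffs]

lemma diffs_getElem (l : List ℕ) (i : ℕ) (h : i < (diffs l).length) :
    (diffs l)[i] = l[i + 1]'(by simp [diffs] at h ⊢; omega) - l[i]'(by simp [diffs] at h; omega) := by
  simp [diffs, List.getElem_zipWith, List.getElem_tail]

lemma setDiffs_length (X : Finset ℕ) : (setDiffs X).length = X.card - 1 := by
  simp [setDiffs, diffs_length]

lemma setDiffs_eq_nil {X : Finset ℕ} (h : X.card ≤ 1) : setDiffs X = [] := by
  have := setDiffs_length X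
  exact List.length_eq_zero_iff.mp (by omega)  -- name?

lemma sorted_lt_sort (X : Finset ℕ) : (X.sort (· ≤ ·)).Pairwise (· < ·) :=
  ((Finset.pairwise_sort X _).and (Finset.sort_nodup X _)).imp (fun h => lt_of_le_of_ne h.1 h.2)

lemma getElem_sort_lt (X : Finset ℕ) {i j : ℕ} (hi : i < (X.sort (· ≤ ·)).length)
    (hj : j < (X.sort (· ≤ ·)).length) (hij : i < j) :
    (X.sort (· ≤ ·))[i] < (X.sort (· ≤ ·))[j] :=
  List.pairwise_iff_getElem.mp (sorted_lt_sort X) i j hi hj hij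


lemma diffs_replicate_getElem {l : List ℕ} {d : ℕ} (h : diffs l = List.replicate (l.length - 1) d)
    {i : ℕ} (hi : i + 1 < l.length) : l[i + 1]'hi - l[i]'(by omega) = d := by
  have h1 : i < (diffs l).length := by rw [diffs_length]; omega
  have h2 := diffs_getElem l i h1
  have h3 := List.getElem_of_eq h h1
  rw [List.getElem_replicate] at h3
  omega

lemma key_const (l : List ℕ) (hs : l.Pairwise (· < ·))
    (h : ∀ i (h2 : i + 1 + 1 < l.length),
      l[i + 1 + 1]'h2 - l[i + 1]'(by omega) = l[i + 1]'(by omega) - l[i]'(by omega)) :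
    ∃ d, 0 < d ∧ diffs l = List.replicate (l.length - 1) d := by
  have hlt := List.pairwise_iff_getElem.mp hs
  rcases Nat.lt_or_ge l.length 2 with hL | hL
  · exact ⟨1, by omega, by
      have h0 : (diffs l).length = 0 := by rw [diffs_length]; omega
      rw [List.length_eq_zero_iff.mp h0]
      have h1 : l.length - 1 = 0 := by omega
      rw [h1]; rfl⟩
  · refine ⟨l[1]'(by omega) - l[0]'(by omega), ?_, ?_⟩
    · have := hlt 0 1 (by omega) (by omega) (by omega); omega
    · have key : ∀ i (hi : i + 1 < l.length), l[i+1] - l[i]'(by omega) = l[1]'(by omega) - l[0]'(by omega) := by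
        intro i
        induction i with
        | zero => intro _; rfl
        | succ k ih => intro hk; rw [h k (by omega)]; exact ih (by omega)
      apply List.ext_getElem
      · rw [diffs_length, List.length_replicate]
      · intro i h1 h2
        rw [diffs_getElem l i h1, List.getElem_replicate]
        exact key i (by have := diffs_length l; omega)


lemma key_lemma (l : List ℕ) (hs : l.Pairwise (· < ·)) {p q : ℕ} (hpq : p < q) (hq : q < l.length)
    (h : diffs (l.eraseIdx p) = diffs (l.eraseIdx q)) :
    p = 0 ∧ q = l.length - 1 ∧ ∃ d, 0 < d ∧ diffs l = List.replicate (l.length - 1) d := by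
  have hlt := List.pairwise_iff_getElem.mp hs
  have hp : p < l.length := by omega
  have hlp : (l.eraseIdx p).length = l.length - 1 := by rw [List.length_eraseIdx]; simp [hp]
  have hlq : (l.eraseIdx q).length = l.length - 1 := by rw [List.length_eraseIdx]; simp [hq]
  have hdp : (diffs (l.eraseIdx p)).length = l.length - 2 := by rw [diffs_length, hlp]; omega
  have hdq : (diffs (l.eraseIdx q)).length = l.length - 2 := by rw [diffs_length, hlq]; omega
  have hq1 : q = l.length - 1 := by
    by_contra hcon
    obtain ⟨j, rfl⟩ : ∃ j, q = j + 1 := ⟨q - 1, by omega⟩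
    have hj2 : j + 2 < l.length := by omega
    have hb1 : j < (diffs (l.eraseIdx p)).length := by omega
    have hb2 : j < (diffs (l.eraseIdx (j+1))).length := by omega
    have hb3 : j + 1 < (l.eraseIdx p).length := by omega
    have hb4 : j < (l.eraseIdx p).length := by omega
    have hb5 : j + 1 < (l.eraseIdx (j+1)).length := by omega
    have hb6 : j < (l.eraseIdx (j+1)).length := by omega
    have e1 := List.getElem_of_eq h hb1
    have e1a := diffs_getElem (l.eraseIdx p) j hb1
    have e1b := diffs_getElem (l.eraseIdx (j+1)) j hb2
    have a1 := List.getElem_eraseIdx_of_ge (l := l) (i := p) (j := (j+1)) hb3 (by omega)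
    have a2 := List.getElem_eraseIdx_of_ge (l := l) (i := p) (j := j) hb4 (by omega)
    have a3 := List.getElem_eraseIdx_of_ge (l := l) (i := (j+1)) (j := (j+1)) hb5 (by omega)
    have a4 := List.getElem_eraseIdx_of_lt (l := l) (i := (j+1)) (j := j) hb6 (by omega)
    have hx1 : l[j]'(by omega) < l[j+1]'(by omega) := hlt j (j+1) (by omega) (by omega) (by omega)
    have hx2 : l[j+1]'(by omega) < l[j+1+1]'(by omega) :=
      hlt (j+1) (j+1+1) (by omega) (by omega) (by omega)
    omega
  subst hq1
  have hp1 : p = 0 := by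
    by_contra hcon
    obtain ⟨j, rfl⟩ : ∃ j, p = j + 1 := ⟨p - 1, by omega⟩
    have hj2 : j + 2 < l.length := by omega
    have hb1 : j < (diffs (l.eraseIdx (j+1))).length := by omega
    have hb2 : j < (diffs (l.eraseIdx (l.length - 1))).length := by omega
    have hb3 : j + 1 < (l.eraseIdx (j+1)).length := by omega
    have hb4 : j < (l.eraseIdx (j+1)).length := by omega
    have hb5 : j + 1 < (l.eraseIdx (l.length - 1)).length := by omega
    have hb6 : j < (l.eraseIdx (l.length - 1)).length := by omega
    have e1 := List.getElem_of_eq h hb1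
    have e1a := diffs_getElem (l.eraseIdx (j+1)) j hb1
    have e1b := diffs_getElem (l.eraseIdx (l.length - 1)) j hb2
    have a1 := List.getElem_eraseIdx_of_ge (l := l) (i := (j+1)) (j := (j+1)) hb3 (by omega)
    have a2 := List.getElem_eraseIdx_of_lt (l := l) (i := (j+1)) (j := j) hb4 (by omega)
    have a3 := List.getElem_eraseIdx_of_lt (l := l) (i := (l.length - 1)) (j := (j+1)) hb5 (by omega)
    have a4 := List.getElem_eraseIdx_of_lt (l := l) (i := (l.length - 1)) (j := j) hb6 (by omega)
    have hx1 : l[j]'(by omega) < l[j+1]'(by omega) := hlt j (j+1) (by omega) (by omega) (by omega)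
    have hx2 : l[j+1]'(by omega) < l[j+1+1]'(by omega) :=
      hlt (j+1) (j+1+1) (by omega) (by omega) (by omega)
    omega
  subst hp1
  refine ⟨rfl, rfl, key_const l hs ?_⟩
  intro i hi
  have hb1 : i < (diffs (l.eraseIdx 0)).length := by omega
  have hb2 : i < (diffs (l.eraseIdx (l.length - 1))).length := by omega
  have hb3 : i + 1 < (l.eraseIdx 0).length := by omega
  have hb4 : i < (l.eraseIdx 0).length := by omega
  have hb5 : i + 1 < (l.eraseIdx (l.length - 1)).length := by omega
  have hb6 : i < (l.eraseIdx (l.length - 1)).length := by omega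
  have e1 := List.getElem_of_eq h hb1
  have e1a := diffs_getElem (l.eraseIdx 0) i hb1
  have e1b := diffs_getElem (l.eraseIdx (l.length - 1)) i hb2
  have a1 := List.getElem_eraseIdx_of_ge (l := l) (i := 0) (j := (i+1)) hb3 (by omega)
  have a2 := List.getElem_eraseIdx_of_ge (l := l) (i := 0) (j := i) hb4 (by omega)
  have a3 := List.getElem_eraseIdx_of_lt (l := l) (i := (l.length - 1)) (j := (i+1)) hb5 (by omega)
  have a4 := List.getElem_eraseIdx_of_lt (l := l) (i := (l.length - 1)) (j := i) hb6 (by omega)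
  omega

lemma diffs_eraseIdx_zero (l : List ℕ) (hL : 2 ≤ l.length) (d : ℕ)
    (h : diffs l = List.replicate (l.length - 1) d) :
    diffs (l.eraseIdx 0) = List.replicate (l.length - 2) d := by
  have hl0 : (l.eraseIdx 0).length = l.length - 1 := by
    have hw : 0 < l.length := by omega
    rw [List.length_eraseIdx]; simp [hw]
  apply List.ext_getElem
  · rw [diffs_length, hl0, List.length_replicate]; omega
  intro i h1 h2
  have hi : i < l.length - 2 := by rwa [List.length_replicate] at h2
  have hb3 : i + 1 < (l.eraseIdx 0).length := by omega
  have hb4 : i < (l.eraseIdx 0).length := by omega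
  have e1a := diffs_getElem (l.eraseIdx 0) i h1
  have a1 := List.getElem_eraseIdx_of_ge (l := l) (i := 0) (j := (i+1)) hb3 (by omega)
  have a2 := List.getElem_eraseIdx_of_ge (l := l) (i := 0) (j := i) hb4 (by omega)
  have dr := diffs_replicate_getElem h (show (i+1) + 1 < l.length by omega)
  rw [List.getElem_replicate]
  omega

lemma diffs_eraseIdx_last (l : List ℕ) (hL : 2 ≤ l.length) (d : ℕ)
    (h : diffs l = List.replicate (l.length - 1) d) :
    diffs (l.eraseIdx (l.length - 1)) = List.replicate (l.length - 2) d := by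
  have hl0 : (l.eraseIdx (l.length - 1)).length = l.length - 1 := by
    have hw : l.length - 1 < l.length := by omega
    rw [List.length_eraseIdx]; simp [hw]
  apply List.ext_getElem
  · rw [diffs_length, hl0, List.length_replicate]; omega
  intro i h1 h2
  have hi : i < l.length - 2 := by rwa [List.length_replicate] at h2
  have hb3 : i + 1 < (l.eraseIdx (l.length - 1)).length := by omega
  have hb4 : i < (l.eraseIdx (l.length - 1)).length := by omega
  have e1a := diffs_getElem (l.eraseIdx (l.length - 1)) i h1
  have a1 := List.getElem_eraseIdx_of_lt (l := l) (i := (l.length - 1)) (j := (i+1)) hb3 (by omega)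
  have a2 := List.getElem_eraseIdx_of_lt (l := l) (i := (l.length - 1)) (j := i) hb4 (by omega)
  have dr := diffs_replicate_getElem h (show i + 1 < l.length by omega)
  rw [List.getElem_replicate]
  omega

lemma sort_erase (X : Finset ℕ) (b : ℕ) :
    ((X.erase b).sort (· ≤ ·)) = (X.sort (· ≤ ·)).erase b := by
  have hperm : ((X.erase b).sort (· ≤ ·)).Perm ((X.sort (· ≤ ·)).erase b) := by
    rw [List.perm_ext_iff_of_nodup (Finset.sort_nodup _ _)
      ((List.erase_sublist (a := b)).nodup (Finset.sort_nodup _ _))]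
    intro a
    rw [Finset.mem_sort, List.Nodup.mem_erase_iff (Finset.sort_nodup _ _), Finset.mem_erase,
      Finset.mem_sort]
  have hs1 : ((X.erase b).sort (· ≤ ·)).Pairwise (· ≤ ·) := Finset.pairwise_sort _ _
  have hs2 : ((X.sort (· ≤ ·)).erase b).Pairwise (· ≤ ·) :=
    List.Pairwise.sublist (List.erase_sublist (a := b)) (Finset.pairwise_sort _ _)
  exact List.Perm.eq_of_pairwise' hs1 hs2 hperm

lemma setDiffs_erase_getElem (X : Finset ℕ) (p : ℕ) (hp : p < (X.sort (· ≤ ·)).length) :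
    setDiffs (X.erase ((X.sort (· ≤ ·))[p])) = diffs ((X.sort (· ≤ ·)).eraseIdx p) := by
  rw [setDiffs, sort_erase, List.Nodup.erase_getElem (Finset.sort_nodup _ _) p hp]

lemma getElem_idx_congr (l : List ℕ) {i j : ℕ} (h : i = j) (hi : i < l.length) :
    l[i]'hi = l[j]'(h ▸ hi) := by subst h; rfl

lemma B_amb (X : Finset ℕ) (hX : 2 ≤ X.card) (d : ℕ)
    (h : setDiffs X = List.replicate (X.card - 1) d) (b : ℕ) (hb : b ∈ X) :
    setDiffs (X.erase b) = List.replicate (X.card - 2) d ↔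
      (b = (X.sort (· ≤ ·))[0]'(by rw [Finset.length_sort]; omega) ∨
       b = (X.sort (· ≤ ·))[X.card - 1]'(by rw [Finset.length_sort]; omega)) := by
  set l := X.sort (· ≤ ·) with hldef
  have hl : l.length = X.card := Finset.length_sort _
  have hrep : diffs l = List.replicate (l.length - 1) d := by
    rw [hl]; exact h
  constructor
  · intro heq
    obtain ⟨p, hp, hpb⟩ := List.mem_iff_getElem.mp (show b ∈ l from (Finset.mem_sort _).mpr hb)
    by_cases hplast : p = l.length - 1
    · right; rw [← hpb]; exact getElem_idx_congr l (by omega) hp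
    · left
      have h1 : setDiffs (X.erase b) = diffs (l.eraseIdx p) := by
        rw [← hpb]; exact setDiffs_erase_getElem X p hp
      have h2 : diffs (l.eraseIdx (l.length - 1)) = List.replicate (l.length - 2) d :=
        diffs_eraseIdx_last l (by omega) d hrep
      have h3 : diffs (l.eraseIdx p) = diffs (l.eraseIdx (l.length - 1)) := by
        rw [h2, h1.symm.trans heq, hl]
      have hk := key_lemma l (sorted_lt_sort X) (show p < l.length - 1 by omega)
        (by omega) h3
      rw [← hpb]; exact getElem_idx_congr l hk.1 hp
  · intro hor
    rcases hor with h0 | h0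
    · have h4 := setDiffs_erase_getElem X 0 (by rw [Finset.length_sort]; omega)
      rw [← h0] at h4
      rw [h4]
      show diffs (l.eraseIdx 0) = List.replicate (X.card - 2) d
      rw [show X.card - 2 = l.length - 2 by omega]
      exact diffs_eraseIdx_zero l (by omega) d hrep
    · have h4 := setDiffs_erase_getElem X (X.card - 1) (by rw [Finset.length_sort]; omega)
      rw [← h0] at h4
      rw [h4]
      show diffs (l.eraseIdx (X.card - 1)) = List.replicate (X.card - 2) d
      rw [show X.card - 1 = l.length - 1 by omega, show X.card - 2 = l.length - 2 by omega]
      exact diffs_eraseIdx_last l (by omega) d hrep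

lemma B_unamb (X : Finset ℕ) (hX : 2 ≤ X.card) (a : ℕ) (ha : a ∈ X)
    (hno : ¬ ∃ d, setDiffs X = List.replicate (X.card - 1) d ∧
      setDiffs (X.erase a) = List.replicate (X.card - 2) d)
    (b : ℕ) (hb : b ∈ X) : setDiffs (X.erase b) = setDiffs (X.erase a) ↔ b = a := by
  constructor
  · intro heq
    by_contra hne
    set l := X.sort (· ≤ ·) with hldef
    have hl : l.length = X.card := Finset.length_sort _
    obtain ⟨p, hp, hpb⟩ := List.mem_iff_getElem.mp (show b ∈ l from (Finset.mem_sort _).mpr hb)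
    obtain ⟨r, hr, hra⟩ := List.mem_iff_getElem.mp (show a ∈ l from (Finset.mem_sort _).mpr ha)
    have hpr : p ≠ r := by rintro rfl; rw [← hpb, ← hra] at hne; exact hne rfl
    have h1 : setDiffs (X.erase b) = diffs (l.eraseIdx p) := by
      rw [← hpb]; exact setDiffs_erase_getElem X p hp
    have h2 : setDiffs (X.erase a) = diffs (l.eraseIdx r) := by
      rw [← hra]; exact setDiffs_erase_getElem X r hr
    have key : ∃ d, 0 < d ∧ diffs l = List.replicate (l.length - 1) d ∧ (r = 0 ∨ r = l.length - 1) := by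
      rcases Nat.lt_or_ge p r with hlt | hge
      · obtain ⟨hp0, hq1, d, hd, hrep⟩ := key_lemma l (sorted_lt_sort X) hlt hr
          (by rw [← h1, ← h2, heq])
        exact ⟨d, hd, hrep, Or.inr hq1⟩
      · have hgt : r < p := by omega
        obtain ⟨hp0, hq1, d, hd, hrep⟩ := key_lemma l (sorted_lt_sort X) hgt hp
          (by rw [← h1, ← h2, heq])
        exact ⟨d, hd, hrep, Or.inl hp0⟩
    obtain ⟨d, hd, hrep, hror⟩ := key
    apply hno
    refine ⟨d, by rw [setDiffs, ← hldef, hrep, hl], ?_⟩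
    rcases hror with h0 | h0
    · rw [h2, h0]
      have : (List.replicate (X.card - 2) d) = List.replicate (l.length - 2) d := by rw [hl]
      rw [this]
      exact diffs_eraseIdx_zero l (by omega) d hrep
    · rw [h2, h0]
      have : (List.replicate (X.card - 2) d) = List.replicate (l.length - 2) d := by rw [hl]
      rw [this]
      exact diffs_eraseIdx_last l (by omega) d hrep
  · rintro rfl; rfl

lemma toFinset_map_add (l : List ℕ) (c : ℕ) :
    (l.map (· + c)).toFinset = l.toFinset.image (· + c) := by
  ext x; simp

lemma diffs_map_add (l : List ℕ) (c : ℕ) : diffs (l.map (· + c)) = diffs l := by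
  apply List.ext_getElem
  · rw [diffs_length, diffs_length, List.length_map]
  intro i h1 h2
  have hi : i + 1 < l.length := by
    have := diffs_length l; omega
  have e1 := diffs_getElem (l.map (· + c)) i h1
  have e2 := diffs_getElem l i h2
  rw [List.getElem_map, List.getElem_map] at e1
  omega

lemma sort_image_add (X : Finset ℕ) (c : ℕ) :
    (X.image (· + c)).sort (· ≤ ·) = (X.sort (· ≤ ·)).map (· + c) := by
  have hperm : ((X.image (· + c)).sort (· ≤ ·)).Perm ((X.sort (· ≤ ·)).map (· + c)) := by
    have hinj : Function.Injective (· + c : ℕ → ℕ) := add_left_injective c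
    rw [List.perm_ext_iff_of_nodup (Finset.sort_nodup _ _)
      ((Finset.sort_nodup X _).map hinj)]
    intro x
    rw [Finset.mem_sort, Finset.mem_image, List.mem_map]
    constructor
    · rintro ⟨y, hy, rfl⟩; exact ⟨y, (Finset.mem_sort _).mpr hy, rfl⟩
    · rintro ⟨y, hy, rfl⟩; exact ⟨y, (Finset.mem_sort _).mp hy, rfl⟩
  have hs2 : ((X.sort (· ≤ ·)).map (· + c)).Pairwise (· ≤ ·) := by
    apply List.Pairwise.map
    · intro a b hab; exact Nat.add_le_add_right hab c
    · exact Finset.pairwise_sort _ _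
  exact List.Perm.eq_of_pairwise' (Finset.pairwise_sort _ _) hs2 hperm

lemma setDiffs_image_add (X : Finset ℕ) (c : ℕ) : setDiffs (X.image (· + c)) = setDiffs X := by
  rw [setDiffs, sort_image_add, diffs_map_add]; rfl

lemma sorted_shift (l1 l2 : List ℕ) (h1 : l1.Pairwise (· ≤ ·)) (h2 : l2.Pairwise (· ≤ ·))
    (hlen : l1.length = l2.length) (hd : diffs l1 = diffs l2) (c : ℕ)
    (h0 : ∀ (h : 0 < l1.length), l2[0]'(by omega) = l1[0]'h + c) :
    l2 = l1.map (· + c) := by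
  have aux : ∀ i (hi : i < l1.length), l2[i]'(by omega) = l1[i]'hi + c := by
    intro i
    induction i with
    | zero => exact fun h => h0 h
    | succ k ih =>
      intro hk
      have hb1 : k < (diffs l1).length := by rw [diffs_length]; omega
      have hb2 : k < (diffs l2).length := by rw [diffs_length]; omega
      have e1 := diffs_getElem l1 k hb1
      have e2 := diffs_getElem l2 k hb2
      have e3 := List.getElem_of_eq hd hb1
      have m1 : l1[k]'(by omega) ≤ l1[k+1]'hk :=
        List.pairwise_iff_getElem.mp h1 k (k+1) (by omega) (by omega) (by omega)
      have m2 : l2[k]'(by omega) ≤ l2[k+1]'(by omega) :=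
        List.pairwise_iff_getElem.mp h2 k (k+1) (by omega) (by omega) (by omega)
      have := ih (by omega)
      omega
  apply List.ext_getElem
  · rw [List.length_map]; omega
  intro i hi1 hi2
  rw [List.getElem_map]
  exact aux i (by omega)

lemma translate_exists (X Y : Finset ℕ) (hcard : X.card = Y.card)
    (hd : setDiffs X = setDiffs Y) : ∃ c, Y = X.image (· + c) ∨ X = Y.image (· + c) := by
  rcases Nat.eq_zero_or_pos X.card with h0 | h0
  · refine ⟨0, Or.inl ?_⟩
    rw [Finset.card_eq_zero.mp h0]
    rw [Finset.card_eq_zero.mp (by omega : Y.card = 0)]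
    rfl
  · have hlx : (X.sort (· ≤ ·)).length = X.card := Finset.length_sort _
    have hly : (Y.sort (· ≤ ·)).length = Y.card := Finset.length_sort _
    have hpos : 0 < (X.sort (· ≤ ·)).length := by omega
    have hposy : 0 < (Y.sort (· ≤ ·)).length := by omega
    rcases Nat.le_total ((X.sort (· ≤ ·))[0]'hpos) ((Y.sort (· ≤ ·))[0]'hposy) with hle | hle
    · refine ⟨(Y.sort (· ≤ ·))[0]'hposy - (X.sort (· ≤ ·))[0]'hpos, Or.inl ?_⟩
      have h00 : (Y.sort (· ≤ ·))[0]'hposy =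
          (X.sort (· ≤ ·))[0]'hpos + ((Y.sort (· ≤ ·))[0]'hposy - (X.sort (· ≤ ·))[0]'hpos) := by
        omega
      have := sorted_shift (X.sort (· ≤ ·)) (Y.sort (· ≤ ·)) (Finset.pairwise_sort _ _)
        (Finset.pairwise_sort _ _) (by omega) hd _ (fun h => h00)
      calc Y = ((Y.sort (· ≤ ·)).toFinset) := (Finset.sort_toFinset _ _).symm
        _ = ((X.sort (· ≤ ·)).map (· + _)).toFinset := by rw [this]
        _ = (X.sort (· ≤ ·)).toFinset.image (· + _) := toFinset_map_add _ _
        _ = X.image (· + _) := by rw [Finset.sort_toFinset]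
    · refine ⟨(X.sort (· ≤ ·))[0]'hpos - (Y.sort (· ≤ ·))[0]'hposy, Or.inr ?_⟩
      have h00 : (X.sort (· ≤ ·))[0]'hpos =
          (Y.sort (· ≤ ·))[0]'hposy + ((X.sort (· ≤ ·))[0]'hpos - (Y.sort (· ≤ ·))[0]'hposy) := by
        omega
      have := sorted_shift (Y.sort (· ≤ ·)) (X.sort (· ≤ ·)) (Finset.pairwise_sort _ _)
        (Finset.pairwise_sort _ _) (by omega) hd.symm _ (fun h => h00)
      calc X = ((X.sort (· ≤ ·)).toFinset) := (Finset.sort_toFinset _ _).symm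
        _ = ((Y.sort (· ≤ ·)).map (· + _)).toFinset := by rw [this]
        _ = (Y.sort (· ≤ ·)).toFinset.image (· + _) := toFinset_map_add _ _
        _ = Y.image (· + _) := by rw [Finset.sort_toFinset]

def Dv (t : List ℕ) (i : ℕ) : List ℕ := setDiffs ((t.drop i).toFinset)

def Tset (X : Finset ℕ) (s : List ℕ) : Set (List ℕ) :=
  {t | t.Nodup ∧ t.toFinset = X ∧ ∀ i, 1 ≤ i → Dv t i = Dv s i}

def Jset (s : List ℕ) : Set ℕ :=
  {k | k + 1 < s.length ∧ ∃ d, Dv s k = List.replicate (s.length - 1 - k) d ∧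
    Dv s (k + 1) = List.replicate (s.length - 2 - k) d}

lemma Dv_cons_succ (b : ℕ) (t : List ℕ) (i : ℕ) : Dv (b :: t) (i + 1) = Dv t i := by
  simp [Dv, List.drop_succ_cons]

lemma Dv_ge_length {t : List ℕ} {i : ℕ} (h : t.length ≤ i) : Dv t i = [] := by
  rw [Dv, List.drop_eq_nil_of_le h]
  exact setDiffs_eq_nil (by simp)

lemma Tset_finite (X : Finset ℕ) (s : List ℕ) : (Tset X s).Finite := by
  apply Set.Finite.subset (((X.sort (· ≤ ·)).permutations).toFinset : Finset (List ℕ)).finite_toSet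
  intro t ht
  simp only [Finset.mem_coe, List.mem_toFinset, List.mem_permutations]
  rw [List.perm_ext_iff_of_nodup ht.1 (Finset.sort_nodup _ _)]
  intro x
  rw [← List.mem_toFinset, ht.2.1, Finset.mem_sort]

lemma Jset_finite (s : List ℕ) : (Jset s).Finite :=
  Set.Finite.subset (Set.finite_Iio s.length) (fun k hk => by
    simp only [Set.mem_Iio]; exact Nat.lt_of_succ_lt hk.1)

lemma Dv_map_add (t : List ℕ) (c i : ℕ) : Dv (t.map (· + c)) i = Dv t i := by
  rw [Dv, ← List.map_drop, toFinset_map_add, setDiffs_image_add, Dv]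

lemma Tset_image_add (X : Finset ℕ) (s : List ℕ) (c : ℕ) :
    Tset (X.image (· + c)) s = (List.map (· + c)) '' (Tset X s) := by
  have hinj : Function.Injective (· + c : ℕ → ℕ) := add_left_injective c
  ext t
  constructor
  · intro ht
    have hall : ∀ x ∈ t, c ≤ x := by
      intro x hx
      have : x ∈ X.image (· + c) := by rw [← ht.2.1]; exact List.mem_toFinset.mpr hx
      obtain ⟨y, _, rfl⟩ := Finset.mem_image.mp this
      omega
    have hback : (t.map (· - c)).map (· + c) = t := by
      rw [List.map_map]
      have : ∀ x ∈ t, ((· + c) ∘ (· - c)) x = id x := by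
        intro x hx; have := hall x hx; simp; omega
      rw [List.map_congr_left this, List.map_id]
    refine ⟨t.map (· - c), ?_, hback⟩
    have hnodup : (t.map (· - c)).Nodup := by
      apply List.Nodup.of_map (· + c)
      rw [hback]; exact ht.1
    have htf : (t.map (· - c)).toFinset = X := by
      apply Finset.image_injective hinj
      rw [← toFinset_map_add, hback, ht.2.1]
    refine ⟨hnodup, htf, ?_⟩
    intro i hi
    have := ht.2.2 i hi
    rwa [← hback, Dv_map_add] at this
  · rintro ⟨t', ht', rfl⟩
    refine ⟨ht'.1.map hinj, ?_, ?_⟩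
    · rw [toFinset_map_add, ht'.2.1]
    · intro i hi; rw [Dv_map_add]; exact ht'.2.2 i hi

lemma Tset_ncard_image_add (X : Finset ℕ) (s : List ℕ) (c : ℕ) :
    (Tset (X.image (· + c)) s).ncard = (Tset X s).ncard := by
  rw [Tset_image_add]
  exact Set.ncard_image_of_injective _ (List.map_injective_iff.mpr (add_left_injective c))

lemma exists_good_erase (X S' : Finset ℕ) (a : ℕ) (ha : a ∉ S')
    (hcard : X.card = (insert a S').card) (hd : setDiffs X = setDiffs (insert a S')) :
    ∃ b ∈ X, setDiffs (X.erase b) = setDiffs S' := by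
  obtain ⟨c, hc | hc⟩ := translate_exists (insert a S') X hcard.symm hd.symm
  · refine ⟨a + c, ?_, ?_⟩
    · rw [hc]; exact Finset.mem_image_of_mem _ (Finset.mem_insert_self a S')
    · rw [hc, ← Finset.image_erase (add_left_injective c), Finset.erase_insert ha,
        setDiffs_image_add]
  · have : a ∈ X.image (· + c) := by rw [← hc]; exact Finset.mem_insert_self a S'
    obtain ⟨x, hx, hxa⟩ := Finset.mem_image.mp this
    refine ⟨x, hx, ?_⟩
    have h1 : (X.erase x).image (· + c) = S' := by
      rw [Finset.image_erase (add_left_injective c), ← hc, hxa, Finset.erase_insert ha]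
    rw [← h1, setDiffs_image_add]

lemma mem_Tset_cons {X : Finset ℕ} {a : ℕ} {s' : List ℕ} (hX : X.Nonempty) (t : List ℕ) :
    t ∈ Tset X (a :: s') ↔ ∃ b t', t = b :: t' ∧ b ∈ X ∧
      setDiffs (X.erase b) = setDiffs s'.toFinset ∧ t' ∈ Tset (X.erase b) s' := by
  constructor
  · intro ht
    obtain ⟨hnd, htf, hcon⟩ := ht
    match t, hnd with
    | [], _ =>
      exfalso
      rw [show ([] : List ℕ).toFinset = ∅ from rfl] at htf
      exact Finset.not_nonempty_empty (htf ▸ hX)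
    | b :: t', hnd =>
      have hbt' : b ∉ t'.toFinset := by
        rw [List.mem_toFinset]; exact (List.nodup_cons.mp hnd).1
      have htf' : t'.toFinset = X.erase b := by
        rw [← htf]
        show t'.toFinset = ((b :: t').toFinset).erase b
        rw [List.toFinset_cons, Finset.erase_insert hbt']
      have hbX : b ∈ X := by
        rw [← htf]; simp
      have hc1 := hcon 1 le_rfl
      rw [show Dv (b :: t') 1 = setDiffs t'.toFinset from rfl,
        show Dv (a :: s') 1 = setDiffs s'.toFinset from rfl, htf'] at hc1
      refine ⟨b, t', rfl, hbX, hc1, (List.nodup_cons.mp hnd).2, htf', ?_⟩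
      intro i hi
      have := hcon (i + 1) (by omega)
      rwa [Dv_cons_succ, Dv_cons_succ] at this
  · rintro ⟨b, t', rfl, hbX, hsd, hnd', htf', hcon'⟩
    have hbt' : b ∉ t' := by
      intro hmem
      have : b ∈ X.erase b := htf' ▸ List.mem_toFinset.mpr hmem
      simp at this
    refine ⟨List.nodup_cons.mpr ⟨hbt', hnd'⟩, ?_, ?_⟩
    · rw [List.toFinset_cons, htf', Finset.insert_erase hbX]
    · intro i hi
      obtain ⟨k, rfl⟩ : ∃ k, i = k + 1 := ⟨i - 1, by omega⟩
      rw [Dv_cons_succ, Dv_cons_succ]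
      rcases Nat.eq_zero_or_pos k with rfl | hk
      · rw [show Dv t' 0 = setDiffs t'.toFinset from rfl,
          show Dv s' 0 = setDiffs s'.toFinset from rfl, htf', hsd]
      · exact hcon' k (by omega)

lemma Jset_shift (a : ℕ) (s' : List ℕ) (k : ℕ) : k + 1 ∈ Jset (a :: s') ↔ k ∈ Jset s' := by
  simp only [Jset, Set.mem_setOf_eq, List.length_cons, Dv_cons_succ]
  have e1 : s'.length + 1 - 1 - (k + 1) = s'.length - 1 - k := by omega
  have e2 : s'.length + 1 - 2 - (k + 1) = s'.length - 2 - k := by omega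
  rw [e1, e2]
  constructor
  · rintro ⟨h1, d, h2, h3⟩; exact ⟨by omega, d, h2, h3⟩
  · rintro ⟨h1, d, h2, h3⟩; exact ⟨by omega, d, h2, h3⟩

lemma Jset_cons_ncard_amb {a : ℕ} {s' : List ℕ} (h0 : 0 ∈ Jset (a :: s')) :
    (Jset (a :: s')).ncard = (Jset s').ncard + 1 := by
  have heq : Jset (a :: s') = insert 0 ((· + 1) '' Jset s') := by
    ext k
    rcases Nat.eq_zero_or_pos k with rfl | hk
    · simp [h0]
    · obtain ⟨j, rfl⟩ : ∃ j, k = j + 1 := ⟨k - 1, by omega⟩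
      rw [Jset_shift]
      simp only [Set.mem_insert_iff, Set.mem_image]
      constructor
      · intro h; exact Or.inr ⟨j, h, rfl⟩
      · rintro (h | ⟨j', hj', hje⟩)
        · omega
        · have : j' = j := by omega
          rwa [← this]
  rw [heq, Set.ncard_insert_of_notMem (by simp) ((Jset_finite s').image _),
    Set.ncard_image_of_injective _ (fun x y h => by omega)]

lemma Jset_cons_ncard_unamb {a : ℕ} {s' : List ℕ} (h0 : 0 ∉ Jset (a :: s')) :
    (Jset (a :: s')).ncard = (Jset s').ncard := by
  have heq : Jset (a :: s') = (· + 1) '' Jset s' := by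
    ext k
    rcases Nat.eq_zero_or_pos k with rfl | hk
    · simp only [Set.mem_image]
      constructor
      · intro h; exact absurd h h0
      · rintro ⟨j, hj, hje⟩; omega
    · obtain ⟨j, rfl⟩ : ∃ j, k = j + 1 := ⟨k - 1, by omega⟩
      rw [Jset_shift]
      simp only [Set.mem_image]
      constructor
      · intro h; exact ⟨j, h, rfl⟩
      · rintro ⟨j', hj', hje⟩
        have : j' = j := by omega
        rwa [← this]
  rw [heq, Set.ncard_image_of_injective _ (fun x y h => by omega)]

lemma Jset_cons_zero_iff {a : ℕ} {s' : List ℕ} (hne : s' ≠ []) (X : Finset ℕ)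
    (hcard : X.card = s'.length + 1) (hd : setDiffs X = setDiffs (a :: s').toFinset) :
    (0 ∈ Jset (a :: s')) ↔ ∃ d, setDiffs X = List.replicate (X.card - 1) d ∧
      setDiffs s'.toFinset = List.replicate (X.card - 2) d := by
  have hlen : 0 < s'.length := List.length_pos_iff.mpr hne
  have hDv0 : Dv (a :: s') 0 = setDiffs X := hd.symm
  have hDv1 : Dv (a :: s') 1 = setDiffs s'.toFinset := rfl
  simp only [Jset, Set.mem_setOf_eq, List.length_cons, hDv0, hDv1]
  have e1 : s'.length + 1 - 1 - 0 = X.card - 1 := by omega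
  have e2 : s'.length + 1 - 2 - 0 = X.card - 2 := by omega
  rw [e1, e2]
  constructor
  · rintro ⟨_, d, h1, h2⟩; exact ⟨d, h1, h2⟩
  · rintro ⟨d, h1, h2⟩; exact ⟨by omega, d, h1, h2⟩

lemma main_count_s14 (s : List ℕ) : ∀ X : Finset ℕ, s.Nodup → X.card = s.length →
    setDiffs X = setDiffs s.toFinset → (Tset X s).ncard = 2 ^ (Jset s).ncard := by
  induction s with
  | nil =>
    intro X _ hcard _
    have hX : X = ∅ := Finset.card_eq_zero.mp hcard
    have hT : Tset X [] = {[]} := by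
      ext t
      simp only [Tset, Set.mem_setOf_eq, Set.mem_singleton_iff]
      constructor
      · rintro ⟨hnd, htf, _⟩
        rw [← List.toFinset_eq_empty_iff, htf, hX]
      · rintro rfl
        exact ⟨List.nodup_nil, by rw [hX]; rfl, fun i _ => rfl⟩
    have hJ : Jset [] = ∅ := by
      ext k; simp only [Jset, Set.mem_setOf_eq, List.length_nil, Set.mem_empty_iff_false,
        iff_false]
      rintro ⟨h, _⟩; omega
    rw [hT, hJ, Set.ncard_singleton, Set.ncard_empty]
    rfl
  | cons a s' ih =>
    intro X hnd hcard hd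
    have hnd' : s'.Nodup := (List.nodup_cons.mp hnd).2
    have has' : a ∉ s' := (List.nodup_cons.mp hnd).1
    by_cases hs'nil : s' = []
    · subst hs'nil
      have hX1 : X.card = 1 := by simpa using hcard
      obtain ⟨x, rfl⟩ := Finset.card_eq_one.mp hX1
      have hT : Tset {x} [a] = {[x]} := by
        ext t
        simp only [Tset, Set.mem_setOf_eq, Set.mem_singleton_iff]
        constructor
        · rintro ⟨hndt, htf, _⟩
          have hlen1 : t.length = 1 := by
            rw [← List.toFinset_card_of_nodup hndt, htf, Finset.card_singleton]
          obtain ⟨y, rfl⟩ := List.length_eq_one_iff.mp hlen1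
          have : y = x := by
            have : y ∈ ({x} : Finset ℕ) := by rw [← htf]; simp
            simpa using this
          rw [this]
        · rintro rfl
          refine ⟨List.nodup_singleton x, by simp, fun i hi => ?_⟩
          rw [Dv_ge_length (by simpa using hi), Dv_ge_length (by simpa using hi)]
      have hJ : Jset [a] = ∅ := by
        ext k; simp only [Jset, Set.mem_setOf_eq, List.length_singleton,
          Set.mem_empty_iff_false, iff_false]
        rintro ⟨h, _⟩; omega
      rw [hT, hJ, Set.ncard_singleton, Set.ncard_empty]
      rfl
    · have hlen' : 0 < s'.length := List.length_pos_iff.mpr hs'nil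
      have hXcard : X.card = s'.length + 1 := by simpa using hcard
      have hX2 : 2 ≤ X.card := by omega
      have hXne : X.Nonempty := Finset.card_pos.mp (by omega)
      have haS' : a ∉ s'.toFinset := by rwa [List.mem_toFinset]
      have hinscard : X.card = (insert a s'.toFinset).card := by
        rw [← List.toFinset_cons, List.toFinset_card_of_nodup hnd]
        exact hcard
      have hdins : setDiffs X = setDiffs (insert a s'.toFinset) := by
        rw [← List.toFinset_cons]; exact hd
      obtain ⟨b0, hb0X, hb0⟩ := exists_good_erase X s'.toFinset a haS' hinscard hdins
      have hcons_inj : ∀ c : ℕ, Function.Injective (fun t : List ℕ => c :: t) :=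
        fun c => List.cons_injective
      by_cases hamb : ∃ d, setDiffs X = List.replicate (X.card - 1) d ∧
        setDiffs s'.toFinset = List.replicate (X.card - 2) d
      · -- ambiguous case
        obtain ⟨d, hd1, hd2⟩ := hamb
        have hp0 : 0 < (X.sort (· ≤ ·)).length := by rw [Finset.length_sort]; omega
        have hp1 : X.card - 1 < (X.sort (· ≤ ·)).length := by rw [Finset.length_sort]; omega
        set x0 := (X.sort (· ≤ ·))[0]'hp0 with hx0def
        set x1 := (X.sort (· ≤ ·))[X.card - 1]'hp1 with hx1def
        have hx0X : x0 ∈ X := (Finset.mem_sort _).mp (List.getElem_mem hp0)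
        have hx1X : x1 ∈ X := (Finset.mem_sort _).mp (List.getElem_mem hp1)
        have hne01 : x0 ≠ x1 :=
          Nat.ne_of_lt (getElem_sort_lt X hp0 hp1 (by omega))
        have hsd0 : setDiffs (X.erase x0) = setDiffs s'.toFinset := by
          rw [hd2]
          exact (B_amb X hX2 d hd1 x0 hx0X).mpr (Or.inl rfl)
        have hsd1 : setDiffs (X.erase x1) = setDiffs s'.toFinset := by
          rw [hd2]
          exact (B_amb X hX2 d hd1 x1 hx1X).mpr (Or.inr rfl)
        have hsplit : Tset X (a :: s') =
            ((fun t => x0 :: t) '' Tset (X.erase x0) s') ∪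
            ((fun t => x1 :: t) '' Tset (X.erase x1) s') := by
          ext t
          rw [mem_Tset_cons hXne]
          constructor
          · rintro ⟨b, t', rfl, hbX, hsd, ht'⟩
            have hor := (B_amb X hX2 d hd1 b hbX).mp (by rw [← hd2]; exact hsd)
            rcases hor with h | h
            · left; subst h; exact ⟨t', ht', rfl⟩
            · right; subst h; exact ⟨t', ht', rfl⟩
          · rintro (⟨t', ht', rfl⟩ | ⟨t', ht', rfl⟩)
            · exact ⟨x0, t', rfl, hx0X, hsd0, ht'⟩
            · exact ⟨x1, t', rfl, hx1X, hsd1, ht'⟩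
        have hdisj : Disjoint ((fun t => x0 :: t) '' Tset (X.erase x0) s')
            ((fun t => x1 :: t) '' Tset (X.erase x1) s') := by
          rw [Set.disjoint_left]
          rintro t ⟨t', _, rfl⟩ ⟨t'', _, heq⟩
          exact hne01 (by injection heq.symm)
        have hcard0 : (X.erase x0).card = s'.length := by
          rw [Finset.card_erase_of_mem hx0X]; omega
        have hcard1 : (X.erase x1).card = s'.length := by
          rw [Finset.card_erase_of_mem hx1X]; omega
        have ih0 := ih (X.erase x0) hnd' hcard0 hsd0
        have ih1 := ih (X.erase x1) hnd' hcard1 hsd1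
        have h0mem : 0 ∈ Jset (a :: s') :=
          (Jset_cons_zero_iff hs'nil X hXcard hd).mpr ⟨d, hd1, hd2⟩
        rw [hsplit, Set.ncard_union_eq hdisj ((Tset_finite _ _).image _)
            ((Tset_finite _ _).image _),
          Set.ncard_image_of_injective _ (hcons_inj x0),
          Set.ncard_image_of_injective _ (hcons_inj x1), ih0, ih1,
          Jset_cons_ncard_amb h0mem, pow_succ]
        omega
      · -- unambiguous case
        have hno : ¬ ∃ d, setDiffs X = List.replicate (X.card - 1) d ∧
            setDiffs (X.erase b0) = List.replicate (X.card - 2) d := by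
          rw [hb0]; exact hamb
        have hsplit : Tset X (a :: s') = (fun t => b0 :: t) '' Tset (X.erase b0) s' := by
          ext t
          rw [mem_Tset_cons hXne]
          constructor
          · rintro ⟨b, t', rfl, hbX, hsd, ht'⟩
            have : b = b0 := (B_unamb X hX2 b0 hb0X hno b hbX).mp (by rw [hsd, hb0])
            subst this
            exact ⟨t', ht', rfl⟩
          · rintro ⟨t', ht', rfl⟩
            exact ⟨b0, t', rfl, hb0X, hb0, ht'⟩
        have hcard0 : (X.erase b0).card = s'.length := by
          rw [Finset.card_erase_of_mem hb0X]; omega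
        have ih0 := ih (X.erase b0) hnd' hcard0 hb0
        have h0mem : 0 ∉ Jset (a :: s') := by
          rw [Jset_cons_zero_iff hs'nil X hXcard hd]
          exact hamb
        rw [hsplit, Set.ncard_image_of_injective _ (hcons_inj b0), ih0,
          Jset_cons_ncard_unamb h0mem]

lemma Dv_small (t : List ℕ) (k : ℕ) (h : t.length ≤ k + 1) : Dv t k = [] :=
  setDiffs_eq_nil (le_trans (List.toFinset_card_le _) (by rw [List.length_drop]; omega))

lemma deltaVec_eq_Dv (s : List ℕ) (i : ℕ) : deltaVec s i = Dv s (i - 1) := rfl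

theorem final (n : ℕ) (hn : 2 ≤ n) (s : List ℕ) (hperm : IsPermList n s) :
    ∃ j, 1 ≤ j ∧
      Nat.card {t : List ℕ | IsPermList n t ∧
        ∀ i, 1 ≤ i → i ≤ n - 1 → deltaVec t i = deltaVec s i} = 2 ^ j ∧
      j = Nat.card {i : ℕ | 1 ≤ i ∧ i ≤ n - 1 ∧ ∃ d,
        deltaVec s i = List.replicate (n - i) d ∧
        deltaVec s (i + 1) = List.replicate (n - i - 1) d} := by
  obtain ⟨hlen, hnd, htf⟩ := hperm
  have hicc : (Finset.Icc 1 n).card = n := by rw [Nat.card_Icc]; omega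
  have hstf : s.toFinset.card = s.length := List.toFinset_card_of_nodup hnd
  -- set equality for the T part
  have hAeq : {t : List ℕ | IsPermList n t ∧
      ∀ i, 1 ≤ i → i ≤ n - 1 → deltaVec t i = deltaVec s i} = Tset s.toFinset s := by
    ext t
    simp only [Set.mem_setOf_eq, Tset, IsPermList]
    constructor
    · rintro ⟨⟨htlen, htnd, httf⟩, hcon⟩
      refine ⟨htnd, by rw [httf, htf], ?_⟩
      intro k hk
      by_cases hks : k + 1 ≤ n - 1
      · have := hcon (k + 1) (by omega) hks
        rwa [deltaVec_eq_Dv, deltaVec_eq_Dv, Nat.add_sub_cancel] at this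
      · rw [Dv_small t k (by omega), Dv_small s k (by omega)]
    · rintro ⟨htnd, httf, hcon⟩
      have htlen : t.length = n := by
        rw [← List.toFinset_card_of_nodup htnd, httf, hstf, hlen]
      refine ⟨⟨htlen, htnd, by rw [httf, htf]⟩, ?_⟩
      intro i hi hin
      rw [deltaVec_eq_Dv, deltaVec_eq_Dv]
      rcases Nat.eq_or_lt_of_le hi with h1 | h1
      · rw [← h1]
        show setDiffs t.toFinset = setDiffs s.toFinset
        rw [httf]
      · exact hcon (i - 1) (by omega)
  -- set equality for the J part
  have hBeq : {i : ℕ | 1 ≤ i ∧ i ≤ n - 1 ∧ ∃ d,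
      deltaVec s i = List.replicate (n - i) d ∧
      deltaVec s (i + 1) = List.replicate (n - i - 1) d} = (· + 1) '' Jset s := by
    ext i
    simp only [Set.mem_setOf_eq, Set.mem_image]
    constructor
    · rintro ⟨h1, h2, d, h3, h4⟩
      refine ⟨i - 1, ⟨by omega, d, ?_, ?_⟩, by omega⟩
      · rw [show s.length - 1 - (i - 1) = n - i by omega, ← deltaVec_eq_Dv]
        exact h3
      · rw [show i - 1 + 1 = (i + 1) - 1 by omega, show s.length - 2 - (i - 1) = n - i - 1 by omega,
          ← deltaVec_eq_Dv]
        exact h4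
    · rintro ⟨k, ⟨hk1, d, hk2, hk3⟩, rfl⟩
      refine ⟨by omega, by omega, d, ?_, ?_⟩
      · rw [deltaVec_eq_Dv, Nat.add_sub_cancel, show n - (k + 1) = s.length - 1 - k by omega]
        exact hk2
      · rw [deltaVec_eq_Dv, show k + 1 + 1 - 1 = k + 1 by omega,
          show n - (k + 1) - 1 = s.length - 2 - k by omega]
        exact hk3
  -- nonemptiness of Jset
  have hJmem : s.length - 2 ∈ Jset s := by
    have hdnd : (s.drop (s.length - 2)).Nodup := (List.drop_sublist _ _).nodup hnd
    have hc2 : (s.drop (s.length - 2)).toFinset.card = 2 := by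
      rw [List.toFinset_card_of_nodup hdnd, List.length_drop]; omega
    have hlen1 : (Dv s (s.length - 2)).length = 1 := by
      rw [Dv, setDiffs_length, hc2]
    obtain ⟨d, hd⟩ := List.length_eq_one_iff.mp hlen1
    refine ⟨by omega, d, ?_, ?_⟩
    · rw [hd, show s.length - 1 - (s.length - 2) = 1 by omega]
      rfl
    · rw [Dv_small s (s.length - 2 + 1) (by omega),
        show s.length - 2 - (s.length - 2) = 0 by omega]
      rfl
  have hJpos : 1 ≤ (Jset s).ncard := by
    have := (Set.ncard_pos (Jset_finite s)).mpr ⟨_, hJmem⟩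
    omega
  refine ⟨(Jset s).ncard, hJpos, ?_, ?_⟩
  · rw [Nat.card_coe_set_eq, hAeq]
    exact main_count_s14 s s.toFinset hnd hstf rfl
  · rw [Nat.card_coe_set_eq, hBeq,
      Set.ncard_image_of_injective _ (add_left_injective 1)]

theorem stmt14 (n : ℕ) (hn : 2 ≤ n) (u s : List ℕ) (h : InvPerm n u s) :
    ∃ j, 1 ≤ j ∧
      Nat.card {t : List ℕ | IsPermList n t ∧
        ∀ i, 1 ≤ i → i ≤ n - 1 → deltaVec t i = deltaVec s i} = 2 ^ j ∧
      j = Nat.card {i : ℕ | 1 ≤ i ∧ i ≤ n - 1 ∧ ∃ d,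
        deltaVec s i = List.replicate (n - i) d ∧
        deltaVec s (i + 1) = List.replicate (n - i - 1) d} := by
  exact final n hn s h.2.1
end
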